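/- arXiv:2206.02072 — 6 statements merged into one kernel-verified Lean document; each statement's English description precedes it below -/
import Mathlib

section
/- Let M and M̂ be two MDP models on the same finite state space S, finite action space A, initial distribution β and horizon H, and let π = (π_1,…,π_H) be any nonstationary policy. Then V^π_{M,1} − V^π_{M̂,1} = Σ_{h=1}^H E_{τ∼ρ^π_{M̂}}[ B^{π_h}_M V^π_{M,h+1}(s_h) − B^{π_h}_{M̂} V^π_{M,h+1}(s_h) ], where s_h is the h-th state of the trajectory τ drawn from the trajectory distribution of π in M̂; and likewise V^π_{M,1} − V^π_{M̂,1} = Σ_{h=1}^H E_{τ∼ρ^π_M}[ B^{π_h}_M V^π_{M̂,h+1}(s_h) − B^{π_h}_{M̂} V^π_{M̂,h+1}(s_h) ], where s_h is the h-th state of the trajectory τ drawn from the trajectory distribution of π in M. -/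
open Finset

/-- An MDP model on state space `S` and action space `A`: a reward table
`R : S → A → ℝ` together with a transition table `T : S → A → S → ℝ`. -/
abbrev MDPModel (S A : Type*) := (S → A → ℝ) × (S → A → S → ℝ)

/-- `f` is a probability mass function on the finite type `α`. -/
def IsPMF {α : Type*} [Fintype α] (f : α → ℝ) : Prop := (∀ a, 0 ≤ f a) ∧ ∑ a, f a = 1

variable {S A : Type*}

section Defs

variable [Fintype S] [Fintype A]

/-- Validity of an MDP model: rewards lie in `[0,1]` and each transition row is a PMF on `S`. -/
def IsValidModel (M : MDPModel S A) : Prop :=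
  (∀ s a, M.1 s a ∈ Set.Icc (0 : ℝ) 1) ∧ ∀ s a, IsPMF (fun s' => M.2 s a s')

/-- A stationary stochastic policy: every row is a PMF on actions. -/
def IsPolicy (σ : S → A → ℝ) : Prop := ∀ s, IsPMF (σ s)

/-- The Bellman operator of model `M` under stationary policy `σ`. -/
def bellman (M : MDPModel S A) (σ : S → A → ℝ) (V : S → ℝ) (s : S) : ℝ :=
  ∑ a, σ s a * (M.1 s a + ∑ s', M.2 s a s' * V s')

/-- Value function with `n` steps to go (auxiliary to `val`); a nonstationary policy is
encoded as `π : ℕ → S → A → ℝ`, with only the components `π 1, …, π H` being relevant. -/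
def valAux (M : MDPModel S A) (π : ℕ → S → A → ℝ) (H : ℕ) : ℕ → S → ℝ
  | 0 => fun _ => 0
  | n + 1 => bellman M (π (H - n)) (valAux M π H n)

/-- `V^π_{M,h}` for horizon `H`, defined by the backward recursion
`V^π_{M,H+1} = 0`, `V^π_{M,h} = B^{π_h}_M V^π_{M,h+1}` (meaningful for `1 ≤ h ≤ H+1`). -/
def val (M : MDPModel S A) (π : ℕ → S → A → ℝ) (H h : ℕ) : S → ℝ :=
  valAux M π H (H + 1 - h)

/-- `Q^π_{M,h}(s,a) = R_M(s,a) + Σ_{s'} T_M(s,a)(s') · V^π_{M,h+1}(s')`. -/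
def qval (M : MDPModel S A) (π : ℕ → S → A → ℝ) (H h : ℕ) (s : S) (a : A) : ℝ :=
  M.1 s a + ∑ s', M.2 s a s' * val M π H (h + 1) s'

/-- The β-averaged value of `π` at step 1: `V^π_{M,1} = Σ_s β(s) · V^π_{M,1}(s)`. -/
def valBar (M : MDPModel S A) (π : ℕ → S → A → ℝ) (H : ℕ) (β : S → ℝ) : ℝ :=
  ∑ s, β s * val M π H 1 s

end Defs

/-- The density of the trajectory distribution `ρ^π_M`: a trajectory
`τ = (s_1, a_1, …, s_H, a_H, s_{H+1})` is encoded as a pair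
`(τ.1, τ.2) : (Fin (H+1) → S) × (Fin H → A)`, with the paper's `s_h` (resp. `a_h`)
being `τ.1 ⟨h-1⟩` (resp. `τ.2 ⟨h-1⟩`), and has probability
`β(s_1) · ∏_{h=1}^H π_h(s_h)(a_h) · T_M(s_h,a_h)(s_{h+1})`. -/
def trajDensity [Fintype S] [Fintype A] (M : MDPModel S A) (β : S → ℝ)
    (π : ℕ → S → A → ℝ) (H : ℕ) (τ : (Fin (H + 1) → S) × (Fin H → A)) : ℝ :=
  β (τ.1 0) * ∏ h : Fin H,
    π (h.1 + 1) (τ.1 h.castSucc) (τ.2 h) * M.2 (τ.1 h.castSucc) (τ.2 h) (τ.1 h.succ)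


namespace VDBD

lemma bellman_sub_sum {S A : Type*} [Fintype S] [Fintype A]
    (Mh : MDPModel S A) (σ : S → A → ℝ) (g V W : S → ℝ) :
    ∑ s, g s * (bellman Mh σ V s - bellman Mh σ W s)
      = ∑ s', (∑ s, g s * ∑ a, σ s a * Mh.2 s a s') * (V s' - W s') := by
  have h1 : ∀ s, bellman Mh σ V s - bellman Mh σ W s
      = ∑ a, ∑ s', σ s a * (Mh.2 s a s' * (V s' - W s')) := by
    intro s
    simp only [bellman, ← Finset.sum_sub_distrib]
    refine Finset.sum_congr rfl fun a _ => ?_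
    rw [← mul_sub, add_sub_add_left_eq_sub, ← Finset.sum_sub_distrib, Finset.mul_sum]
    exact Finset.sum_congr rfl fun s' _ => by ring
  calc ∑ s, g s * (bellman Mh σ V s - bellman Mh σ W s)
      = ∑ s, ∑ s', ∑ a, g s * (σ s a * (Mh.2 s a s' * (V s' - W s'))) := by
        refine Finset.sum_congr rfl fun s _ => ?_
        rw [h1, Finset.mul_sum, Finset.sum_comm]
        exact Finset.sum_congr rfl fun s' _ => by rw [Finset.mul_sum]
    _ = ∑ s', ∑ s, ∑ a, g s * (σ s a * (Mh.2 s a s' * (V s' - W s'))) := Finset.sum_comm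
    _ = ∑ s', (∑ s, g s * ∑ a, σ s a * Mh.2 s a s') * (V s' - W s') := by
        refine Finset.sum_congr rfl fun s' _ => ?_
        rw [Finset.sum_mul]
        refine Finset.sum_congr rfl fun s _ => ?_
        rw [Finset.mul_sum, Finset.sum_mul]
        exact Finset.sum_congr rfl fun a _ => by ring

open Finset

variable {S A : Type*}

/-- Forward state marginal of a time-inhomogeneous chain. -/
def fwd [Fintype S] (μ : S → ℝ) (T : ℕ → S → S → ℝ) : ℕ → S → ℝ
  | 0 => μ
  | k+1 => fun s' => ∑ s, fwd μ T k s * T k s s'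

lemma chain_marginal [Fintype S] (n : ℕ) (μ : S → ℝ) (T : ℕ → S → S → ℝ)
    (hT : ∀ k s, ∑ s', T k s s' = 1) (j : Fin (n+1)) (f : S → ℝ) :
    ∑ x : Fin (n+1) → S, (μ (x 0) * ∏ k : Fin n, T k.1 (x k.castSucc) (x k.succ)) * f (x j)
      = ∑ s, fwd μ T j.1 s * f s := by
  induction n generalizing f with
  | zero =>
      rw [← (Equiv.funUnique (Fin 1) S).symm.sum_comp]
      simp [fwd, Fin.fin_one_eq_zero j]
  | succ n ih =>
      rw [← (Fin.snocEquiv (fun _ : Fin (n+2) => S)).sum_comp, Fintype.sum_prod_type]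
      have h0 : ∀ (y : Fin (n+1) → S) (s' : S), (Fin.snoc y s' : Fin (n+2) → S) 0 = y 0 := by
        intro y s'
        have : (0 : Fin (n+2)) = (0 : Fin (n+1)).castSucc := by simp
        rw [this, Fin.snoc_castSucc]
      induction j using Fin.lastCases with
      | last =>
          have key := ih (Fin.last n) (fun s => ∑ s', T n s s' * f s')
          calc ∑ s' : S, ∑ y : Fin (n+1) → S,
                (μ ((Fin.snocEquiv (fun _ : Fin (n+2) => S)) (s', y) 0) *
                  ∏ k : Fin (n+1), T k.1 ((Fin.snocEquiv (fun _ : Fin (n+2) => S)) (s', y) k.castSucc)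
                    ((Fin.snocEquiv (fun _ : Fin (n+2) => S)) (s', y) k.succ)) *
                  f ((Fin.snocEquiv (fun _ : Fin (n+2) => S)) (s', y) (Fin.last (n+1)))
              = ∑ y : Fin (n+1) → S, (μ (y 0) * ∏ k : Fin n, T k.1 (y k.castSucc) (y k.succ)) *
                  (∑ s', T n (y (Fin.last n)) s' * f s') := by
                rw [Finset.sum_comm]
                refine Finset.sum_congr rfl fun y _ => ?_
                rw [Finset.mul_sum]
                refine Finset.sum_congr rfl fun s' _ => ?_
                simp only [Fin.snocEquiv, Equiv.coe_fn_mk, h0, Fin.prod_univ_castSucc,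
                  Fin.snoc_castSucc, Fin.snoc_last, Fin.succ_castSucc, Fin.coe_castSucc,
                  Fin.succ_last, Fin.val_last]
                ring
            _ = ∑ s, fwd μ T n s * ∑ s', T n s s' * f s' := key
            _ = ∑ s, fwd μ T (Fin.last (n+1)).1 s * f s := by
                simp only [Fin.val_last, fwd, Finset.sum_mul, Finset.mul_sum]
                rw [Finset.sum_comm]
                exact Finset.sum_congr rfl fun s' _ => Finset.sum_congr rfl fun s _ => by ring
      | cast i =>
          have key := ih i f
          calc ∑ s' : S, ∑ y : Fin (n+1) → S,
                (μ ((Fin.snocEquiv (fun _ : Fin (n+2) => S)) (s', y) 0) *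
                  ∏ k : Fin (n+1), T k.1 ((Fin.snocEquiv (fun _ : Fin (n+2) => S)) (s', y) k.castSucc)
                    ((Fin.snocEquiv (fun _ : Fin (n+2) => S)) (s', y) k.succ)) *
                  f ((Fin.snocEquiv (fun _ : Fin (n+2) => S)) (s', y) i.castSucc)
              = ∑ y : Fin (n+1) → S, (μ (y 0) * ∏ k : Fin n, T k.1 (y k.castSucc) (y k.succ)) * f (y i) := by
                rw [Finset.sum_comm]
                refine Finset.sum_congr rfl fun y _ => ?_
                have : ∀ s', (μ ((Fin.snocEquiv (fun _ : Fin (n+2) => S)) (s', y) 0) *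
                  ∏ k : Fin (n+1), T k.1 ((Fin.snocEquiv (fun _ : Fin (n+2) => S)) (s', y) k.castSucc)
                    ((Fin.snocEquiv (fun _ : Fin (n+2) => S)) (s', y) k.succ)) *
                  f ((Fin.snocEquiv (fun _ : Fin (n+2) => S)) (s', y) i.castSucc)
                  = ((μ (y 0) * ∏ k : Fin n, T k.1 (y k.castSucc) (y k.succ)) * f (y i)) * T n (y (Fin.last n)) s' := by
                  intro s'
                  simp only [Fin.snocEquiv, Equiv.coe_fn_mk, h0, Fin.prod_univ_castSucc,
                    Fin.snoc_castSucc, Fin.snoc_last, Fin.succ_castSucc, Fin.coe_castSucc,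
                    Fin.succ_last, Fin.val_last]
                  ring
                simp only [this, ← Finset.mul_sum, hT, mul_one]
            _ = ∑ s, fwd μ T (i.castSucc).1 s * f s := by rw [Fin.coe_castSucc]; exact key

section

variable [Fintype S] [Fintype A]

/-- One-step state kernel of policy `π` in model `M`. -/
def ker (M : MDPModel S A) (π : ℕ → S → A → ℝ) (k : ℕ) (s s' : S) : ℝ :=
  ∑ a, π (k+1) s a * M.2 s a s'

lemma ker_rowsum (M : MDPModel S A) (hM : IsValidModel M)
    (π : ℕ → S → A → ℝ) (hπ : ∀ h, IsPolicy (π h)) (k : ℕ) (s : S) :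
    ∑ s', ker M π k s s' = 1 := by
  unfold ker
  rw [Finset.sum_comm]
  have : ∀ a : A, ∑ s', π (k+1) s a * M.2 s a s' = π (k+1) s a := by
    intro a
    rw [← Finset.mul_sum, (hM.2 s a).2, mul_one]
  simp only [this]
  exact (hπ (k+1) s).2

lemma traj_marginal (M : MDPModel S A) (hM : IsValidModel M) (β : S → ℝ)
    (π : ℕ → S → A → ℝ) (hπ : ∀ h, IsPolicy (π h)) (H : ℕ)
    (j : Fin (H+1)) (f : S → ℝ) :
    ∑ τ : (Fin (H + 1) → S) × (Fin H → A), trajDensity M β π H τ * f (τ.1 j)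
      = ∑ s, fwd β (ker M π) j.1 s * f s := by
  rw [Fintype.sum_prod_type, ← chain_marginal H β (ker M π) (ker_rowsum M hM π hπ) j f]
  refine Finset.sum_congr rfl fun x _ => ?_
  have : (β (x 0) * ∏ k : Fin H, ker M π k.1 (x k.castSucc) (x k.succ)) * f (x j)
      = ∑ a : Fin H → A, trajDensity M β π H (x, a) * f (x j) := by
    unfold ker trajDensity
    rw [Finset.prod_univ_sum (fun _ : Fin H => (Finset.univ : Finset A))]
    simp only [Fintype.piFinset_univ, Finset.sum_mul, Finset.mul_sum]
  rw [this]

lemma val_top (M : MDPModel S A) (π : ℕ → S → A → ℝ) (H : ℕ) :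
    val M π H (H + 1) = fun _ => 0 := by
  unfold _root_.val
  rw [Nat.sub_self]
  rfl

lemma val_step (M : MDPModel S A) (π : ℕ → S → A → ℝ) (H h : ℕ) (hh : h ≤ H) :
    val M π H h = bellman M (π h) (val M π H (h + 1)) := by
  unfold _root_.val
  have e1 : H + 1 - h = (H - h) + 1 := by omega
  have e2 : H - (H - h) = h := by omega
  have e3 : H + 1 - (h + 1) = H - h := by omega
  rw [e1, e3]
  show bellman M (π (H - (H - h))) (valAux M π H (H - h)) = _
  rw [e2]

lemma tele (M Mh : MDPModel S A) (hM : IsValidModel M) (hMh : IsValidModel Mh)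
    (β : S → ℝ) (π : ℕ → S → A → ℝ) (hπ : ∀ h, IsPolicy (π h)) (H : ℕ)
    (m : ℕ) (hm : m ≤ H) :
    ∑ s, fwd β (ker Mh π) (H - m) s * (val M π H (H - m + 1) s - val Mh π H (H - m + 1) s)
      = ∑ k ∈ Finset.Ico (H - m) H, ∑ s, fwd β (ker Mh π) k s *
          (bellman M (π (k+1)) (val M π H (k+2)) s - bellman Mh (π (k+1)) (val M π H (k+2)) s) := by
  induction m with
  | zero =>
      rw [Nat.sub_zero]
      simp [val_top]
  | succ m ih =>
      have hm' : m ≤ H := by omega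
      set h := H - (m + 1) with hdef
      have hlt : h < H := by omega
      have h1 : h + 1 = H - m := by omega
      have hstepM := val_step M π H (h+1) (by omega)
      have hstepMh := val_step Mh π H (h+1) (by omega)
      have split : ∀ s, fwd β (ker Mh π) h s * (val M π H (h + 1) s - val Mh π H (h + 1) s)
          = fwd β (ker Mh π) h s *
              (bellman M (π (h+1)) (val M π H (h+2)) s - bellman Mh (π (h+1)) (val M π H (h+2)) s)
            + fwd β (ker Mh π) h s *
              (bellman Mh (π (h+1)) (val M π H (h+2)) s - bellman Mh (π (h+1)) (val Mh π H (h+2)) s) := by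
        intro s
        rw [hstepM, hstepMh]
        ring
      rw [Finset.sum_eq_sum_Ico_succ_bot hlt]
      simp only [split, Finset.sum_add_distrib]
      congr 1
      have push : ∑ s, fwd β (ker Mh π) h s *
            (bellman Mh (π (h+1)) (val M π H (h+2)) s - bellman Mh (π (h+1)) (val Mh π H (h+2)) s)
          = ∑ s', fwd β (ker Mh π) (h+1) s' * (val M π H (h+2) s' - val Mh π H (h+2) s') := by
        rw [bellman_sub_sum Mh (π (h+1)) (fwd β (ker Mh π) h) (val M π H (h+2)) (val Mh π H (h+2))]
        rfl
      rw [push, h1]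
      have h2 : h + 2 = H - m + 1 := by omega
      rw [h2]
      exact ih hm'


lemma half {S A : Type*} [Fintype S] [Fintype A]
    (H : ℕ) (β : S → ℝ)
    (M Mh : MDPModel S A) (hM : IsValidModel M) (hMh : IsValidModel Mh)
    (π : ℕ → S → A → ℝ) (hπ : ∀ h, IsPolicy (π h)) :
    valBar M π H β - valBar Mh π H β =
      ∑ h : Fin H, ∑ τ : (Fin (H + 1) → S) × (Fin H → A), trajDensity Mh β π H τ *
        (bellman M (π (h.1 + 1)) (val M π H (h.1 + 2)) (τ.1 h.castSucc) -
          bellman Mh (π (h.1 + 1)) (val M π H (h.1 + 2)) (τ.1 h.castSucc)) := by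
  calc valBar M π H β - valBar Mh π H β
      = ∑ s, fwd β (ker Mh π) (H - H) s * (val M π H (H - H + 1) s - val Mh π H (H - H + 1) s) := by
        rw [Nat.sub_self]
        unfold valBar
        rw [← Finset.sum_sub_distrib]
        exact Finset.sum_congr rfl fun s _ =>
          by rw [show fwd β (ker Mh π) 0 s = β s from rfl]; ring
    _ = ∑ k ∈ Finset.Ico (H - H) H, ∑ s, fwd β (ker Mh π) k s *
          (bellman M (π (k+1)) (val M π H (k+2)) s - bellman Mh (π (k+1)) (val M π H (k+2)) s) :=
        tele M Mh hM hMh β π hπ H H le_rfl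
    _ = ∑ h : Fin H, ∑ s, fwd β (ker Mh π) h.1 s *
          (bellman M (π (h.1+1)) (val M π H (h.1+2)) s - bellman Mh (π (h.1+1)) (val M π H (h.1+2)) s) := by
        rw [Nat.sub_self, ← Finset.range_eq_Ico, ← Fin.sum_univ_eq_sum_range]
    _ = ∑ h : Fin H, ∑ τ : (Fin (H + 1) → S) × (Fin H → A), trajDensity Mh β π H τ *
        (bellman M (π (h.1 + 1)) (val M π H (h.1 + 2)) (τ.1 h.castSucc) -
          bellman Mh (π (h.1 + 1)) (val M π H (h.1 + 2)) (τ.1 h.castSucc)) := by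
        refine Finset.sum_congr rfl fun h _ => ?_
        have := (traj_marginal Mh hMh β π hπ H h.castSucc
          (fun s => bellman M (π (h.1 + 1)) (val M π H (h.1 + 2)) s -
            bellman Mh (π (h.1 + 1)) (val M π H (h.1 + 2)) s)).symm
        simpa using this

end

end VDBD

/-- simulation lemma / Bellman-error value decomposition.
For two MDP models `M`, `Mh` on the same `S`, `A`, `β`, `H` and any nonstationary
policy `π`, the gap `V^π_{M,1} − V^π_{Mh,1}` decomposes as the sum over `h ∈ [H]` of
expected Bellman-operator differences, under trajectories of `π` in `Mh` applied
to `V^π_{M,h+1}`, and likewise under trajectories of `π` in `M` applied to `V^π_{Mh,h+1}`. -/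
theorem value_difference_bellman_decomposition
    [Fintype S] [Fintype A] [Nonempty S] [Nonempty A]
    (H : ℕ) (hH : 1 ≤ H) (β : S → ℝ) (hβ : IsPMF β)
    (M Mh : MDPModel S A) (hM : IsValidModel M) (hMh : IsValidModel Mh)
    (π : ℕ → S → A → ℝ) (hπ : ∀ h, IsPolicy (π h)) :
    (valBar M π H β - valBar Mh π H β =
      ∑ h : Fin H, ∑ τ : (Fin (H + 1) → S) × (Fin H → A), trajDensity Mh β π H τ *
        (bellman M (π (h.1 + 1)) (val M π H (h.1 + 2)) (τ.1 h.castSucc) -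
          bellman Mh (π (h.1 + 1)) (val M π H (h.1 + 2)) (τ.1 h.castSucc))) ∧
    (valBar M π H β - valBar Mh π H β =
      ∑ h : Fin H, ∑ τ : (Fin (H + 1) → S) × (Fin H → A), trajDensity M β π H τ *
        (bellman M (π (h.1 + 1)) (val Mh π H (h.1 + 2)) (τ.1 h.castSucc) -
          bellman Mh (π (h.1 + 1)) (val Mh π H (h.1 + 2)) (τ.1 h.castSucc))) := by
  constructor
  · exact VDBD.half H β M Mh hM hMh π hπ
  · have h2 := VDBD.half H β Mh M hMh hM π hπ
    calc valBar M π H β - valBar Mh π H β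
        = -(valBar Mh π H β - valBar M π H β) := by ring
      _ = -∑ h : Fin H, ∑ τ : (Fin (H + 1) → S) × (Fin H → A), trajDensity M β π H τ *
            (bellman Mh (π (h.1 + 1)) (val Mh π H (h.1 + 2)) (τ.1 h.castSucc) -
              bellman M (π (h.1 + 1)) (val Mh π H (h.1 + 2)) (τ.1 h.castSucc)) := by rw [h2]
      _ = ∑ h : Fin H, ∑ τ : (Fin (H + 1) → S) × (Fin H → A), trajDensity M β π H τ *
            (bellman M (π (h.1 + 1)) (val Mh π H (h.1 + 2)) (τ.1 h.castSucc) -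
              bellman Mh (π (h.1 + 1)) (val Mh π H (h.1 + 2)) (τ.1 h.castSucc)) := by
          rw [← Finset.sum_neg_distrib]
          refine Finset.sum_congr rfl fun h _ => ?_
          rw [← Finset.sum_neg_distrib]
          exact Finset.sum_congr rfl fun τ _ => by ring
end

section
/- Let M be an MDP model on finite state space S, finite action space A, with initial distribution β and horizon H, and let π¹ and π² be two nonstationary policies. Then V^{π¹}_{M,1} − V^{π²}_{M,1} = E_{τ∼ρ^{π²}_M}[ Σ_{h=1}^H ( V^{π¹}_{M,h}(s_h) − Q^{π¹}_{M,h}(s_h,a_h) ) ], where (s_h, a_h) are the h-th state and action of the trajectory τ drawn from the trajectory distribution of π² in M. -/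
open Finset

variable {S A : Type*}

section PDAux

variable [Fintype S] [Fintype A]

/-- Expected value of `∑_{h=1}^n f h (s_h) (a_h)` over an `n`-step trajectory starting
at `s`, defined recursively. -/
def expSum (M : MDPModel S A) : ℕ → (ℕ → S → A → ℝ) → (ℕ → S → A → ℝ) → S → ℝ
  | 0, _, _, _ => 0
  | n + 1, π, f, s => ∑ a, π 1 s a *
      (f 1 s a + ∑ s', M.2 s a s' * expSum M n (fun k => π (k + 1)) (fun k => f (k + 1)) s')

lemma PD_traj_cons (M : MDPModel S A) (β : S → ℝ) (π : ℕ → S → A → ℝ) (n : ℕ)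
    (s0 : S) (a0 : A) (σ' : Fin (n + 1) → S) (α' : Fin n → A) :
    trajDensity M β π (n + 1) (Fin.cons s0 σ', Fin.cons a0 α') =
      β s0 * π 1 s0 a0 * trajDensity M (M.2 s0 a0) (fun k => π (k + 1)) n (σ', α') := by
  simp only [trajDensity, Fin.prod_univ_succ, Fin.cons_zero, Fin.cons_succ,
    Fin.castSucc_zero, Fin.succ_zero_eq_one]
  simp only [← Fin.succ_castSucc, Fin.cons_succ, Fin.val_succ, Fin.val_zero]
  ring

lemma PD_sum_split (n : ℕ) (F : ((Fin (n + 2) → S) × (Fin (n + 1) → A)) → ℝ) :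
    ∑ τ : (Fin (n + 2) → S) × (Fin (n + 1) → A), F τ =
      ∑ s0 : S, ∑ a0 : A, ∑ τ : (Fin (n + 1) → S) × (Fin n → A),
        F (Fin.cons s0 τ.1, Fin.cons a0 τ.2) := by
  rw [Fintype.sum_prod_type, ← (Fin.consEquiv (fun _ : Fin (n + 2) => S)).sum_comp,
    Fintype.sum_prod_type]
  refine Finset.sum_congr rfl fun s0 _ => ?_
  have h1 : ∀ σ' : Fin (n + 1) → S,
      (∑ α : Fin (n + 1) → A, F ((Fin.consEquiv fun _ => S) (s0, σ'), α))
      = ∑ a0, ∑ α' : Fin n → A, F (Fin.cons s0 σ', Fin.cons a0 α') := by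
    intro σ'
    rw [← (Fin.consEquiv (fun _ : Fin (n + 1) => A)).sum_comp, Fintype.sum_prod_type]
    simp [Fin.consEquiv]
  simp only [h1]
  rw [Finset.sum_comm]
  simp [Fintype.sum_prod_type]

lemma PD_sum_fun1 (g : (Fin 1 → S) → ℝ) : ∑ σ : Fin 1 → S, g σ = ∑ s, g (fun _ => s) := by
  rw [← (Equiv.funUnique (Fin 1) S).symm.sum_comp]
  rfl

lemma PD_mass (M : MDPModel S A) (hT : ∀ s a, ∑ s', M.2 s a s' = 1) :
    ∀ (n : ℕ) (β : S → ℝ) (π : ℕ → S → A → ℝ), (∀ h s, ∑ a, π h s a = 1) →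
      ∑ τ : (Fin (n + 1) → S) × (Fin n → A), trajDensity M β π n τ = ∑ s, β s := by
  intro n
  induction n with
  | zero =>
    intro β π hπ
    rw [Fintype.sum_prod_type]
    have h0 : ∀ σ : Fin 1 → S, ∑ α : Fin 0 → A, trajDensity M β π 0 (σ, α) = β (σ 0) := by
      intro σ
      rw [Fintype.sum_unique]
      simp [trajDensity]
    simp only [h0]
    rw [PD_sum_fun1 (fun σ : Fin 1 → S => β (σ 0))]
  | succ n ih =>
    intro β π hπ
    rw [PD_sum_split]
    have key : ∀ s0 a0, ∀ τ : (Fin (n + 1) → S) × (Fin n → A),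
        trajDensity M β π (n + 1) (Fin.cons s0 τ.1, Fin.cons a0 τ.2) =
          β s0 * π 1 s0 a0 * trajDensity M (M.2 s0 a0) (fun k => π (k + 1)) n τ :=
      fun s0 a0 τ => PD_traj_cons M β π n s0 a0 τ.1 τ.2
    simp only [key]
    have hπ' : ∀ h s, ∑ a, (fun k => π (k + 1)) h s a = 1 := fun h s => hπ (h + 1) s
    calc ∑ s0, ∑ a0, ∑ τ : (Fin (n + 1) → S) × (Fin n → A),
          β s0 * π 1 s0 a0 * trajDensity M (M.2 s0 a0) (fun k => π (k + 1)) n τ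
        = ∑ s0, ∑ a0, β s0 * π 1 s0 a0 := by
          refine Finset.sum_congr rfl fun s0 _ => Finset.sum_congr rfl fun a0 _ => ?_
          rw [← Finset.mul_sum, ih (M.2 s0 a0) _ hπ', hT s0 a0, mul_one]
      _ = ∑ s, β s := by
          refine Finset.sum_congr rfl fun s0 _ => ?_
          rw [← Finset.mul_sum, hπ 1 s0, mul_one]

lemma PD_expSum_eq (M : MDPModel S A) (hT : ∀ s a, ∑ s', M.2 s a s' = 1) :
    ∀ (n : ℕ) (β : S → ℝ) (π f : ℕ → S → A → ℝ), (∀ h s, ∑ a, π h s a = 1) →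
      ∑ τ : (Fin (n + 1) → S) × (Fin n → A), trajDensity M β π n τ *
          ∑ h : Fin n, f (h.1 + 1) (τ.1 h.castSucc) (τ.2 h)
        = ∑ s, β s * expSum M n π f s := by
  intro n
  induction n with
  | zero => intro β π f hπ; simp [expSum]
  | succ n ih =>
    intro β π f hπ
    rw [PD_sum_split]
    have hπ' : ∀ h s, ∑ a, (fun k => π (k + 1)) h s a = 1 := fun h s => hπ (h + 1) s
    have key : ∀ s0 : S, ∀ a0 : A,
        (∑ τ : (Fin (n + 1) → S) × (Fin n → A),
          trajDensity M β π (n + 1) (Fin.cons s0 τ.1, Fin.cons a0 τ.2) *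
            ∑ h : Fin (n + 1), f (h.1 + 1) ((Fin.cons s0 τ.1 : Fin (n + 2) → S) h.castSucc)
              ((Fin.cons a0 τ.2 : Fin (n + 1) → A) h))
        = β s0 * π 1 s0 a0 *
            (f 1 s0 a0 + ∑ s', M.2 s0 a0 s' *
              expSum M n (fun k => π (k + 1)) (fun k => f (k + 1)) s') := by
      intro s0 a0
      have e1 : ∀ τ : (Fin (n + 1) → S) × (Fin n → A),
          (∑ h : Fin (n + 1), f (h.1 + 1) ((Fin.cons s0 τ.1 : Fin (n + 2) → S) h.castSucc)
            ((Fin.cons a0 τ.2 : Fin (n + 1) → A) h))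
          = f 1 s0 a0 + ∑ h : Fin n, (fun k => f (k + 1)) (h.1 + 1) (τ.1 h.castSucc) (τ.2 h) := by
        intro τ
        rw [Fin.sum_univ_succ]
        simp [← Fin.succ_castSucc]
      have e2 : ∀ τ : (Fin (n + 1) → S) × (Fin n → A),
          trajDensity M β π (n + 1) (Fin.cons s0 τ.1, Fin.cons a0 τ.2) =
            β s0 * π 1 s0 a0 * trajDensity M (M.2 s0 a0) (fun k => π (k + 1)) n τ :=
        fun τ => PD_traj_cons M β π n s0 a0 τ.1 τ.2
      simp only [e1, e2, mul_assoc]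
      rw [← Finset.mul_sum, ← Finset.mul_sum]
      congr 1
      congr 1
      simp only [mul_add]
      rw [Finset.sum_add_distrib]
      congr 1
      · rw [← Finset.sum_mul, PD_mass M hT n _ _ hπ', hT s0 a0, one_mul]
      · exact ih (M.2 s0 a0) (fun k => π (k + 1)) (fun k => f (k + 1)) hπ'
    simp only [key]
    refine Finset.sum_congr rfl fun s0 _ => ?_
    rw [show expSum M (n + 1) π f s0 = ∑ a, π 1 s0 a *
      (f 1 s0 a + ∑ s', M.2 s0 a s' *
        expSum M n (fun k => π (k + 1)) (fun k => f (k + 1)) s') from rfl,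
      Finset.mul_sum]
    exact Finset.sum_congr rfl fun a0 _ => by ring

lemma PD_val_last (M : MDPModel S A) (π : ℕ → S → A → ℝ) (H : ℕ) :
    val M π H (H + 1) = fun _ => 0 := by
  simp [_root_.val, Nat.sub_self, valAux]

lemma PD_val_rec (M : MDPModel S A) (π : ℕ → S → A → ℝ) {H h : ℕ} (h2 : h ≤ H) :
    val M π H h = bellman M (π h) (val M π H (h + 1)) := by
  unfold _root_.val
  have e : H + 1 - h = (H - h) + 1 := by omega
  rw [e]
  have e2 : H - (H - h) = h := by omega
  have e3 : H - h = H + 1 - (h + 1) := by omega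
  show valAux M π H ((H - h) + 1) = _
  rw [valAux, e2, e3]

lemma PD_expSum_val (M : MDPModel S A) (H : ℕ) (π1 π2 : ℕ → S → A → ℝ)
    (hπ2 : ∀ h s, ∑ a, π2 h s a = 1) :
    ∀ (n k : ℕ), n + k = H → ∀ s : S,
      expSum M n (fun j => π2 (j + k))
          (fun j s a => val M π1 H (j + k) s - qval M π1 H (j + k) s a) s
        = val M π1 H (k + 1) s - val M π2 H (k + 1) s := by
  intro n
  induction n with
  | zero =>
    intro k hk s
    have : k = H := by omega
    subst this
    simp [expSum, PD_val_last]
  | succ n ih =>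
    intro k hk s
    simp only [expSum]
    have hjk : ∀ j : ℕ, j + 1 + k = j + (k + 1) := fun j => by omega
    simp only [hjk]
    simp only [Nat.zero_add]
    simp only [ih (k + 1) (by omega)]
    rw [PD_val_rec M π2 (show k + 1 ≤ H by omega), bellman]
    have hv1 : val M π1 H (k + 1) s = (∑ a, π2 (k + 1) s a) * val M π1 H (k + 1) s := by
      rw [hπ2 (k + 1) s, one_mul]
    conv_rhs => rw [hv1]
    rw [Finset.sum_mul, ← Finset.sum_sub_distrib]
    refine Finset.sum_congr rfl fun a _ => ?_
    simp only [qval, mul_sub, Finset.sum_sub_distrib]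
    ring

end PDAux

/-- performance-difference lemma.  For an MDP model `M` and two
nonstationary policies `π¹`, `π²`,
`V^{π¹}_{M,1} − V^{π²}_{M,1} = E_{τ∼ρ^{π²}_M}[ Σ_{h=1}^H (V^{π¹}_{M,h}(s_h) − Q^{π¹}_{M,h}(s_h,a_h)) ]`. -/
theorem performance_difference
    [Fintype S] [Fintype A] [Nonempty S] [Nonempty A]
    (H : ℕ) (hH : 1 ≤ H) (β : S → ℝ) (hβ : IsPMF β)
    (M : MDPModel S A) (hM : IsValidModel M)
    (π1 π2 : ℕ → S → A → ℝ) (hπ1 : ∀ h, IsPolicy (π1 h)) (hπ2 : ∀ h, IsPolicy (π2 h)) :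
    valBar M π1 H β - valBar M π2 H β =
      ∑ τ : (Fin (H + 1) → S) × (Fin H → A), trajDensity M β π2 H τ *
        ∑ h : Fin H,
          (val M π1 H (h.1 + 1) (τ.1 h.castSucc) -
            qval M π1 H (h.1 + 1) (τ.1 h.castSucc) (τ.2 h)) := by
  have hT : ∀ s a, ∑ s', M.2 s a s' = 1 := fun s a => (hM.2 s a).2
  have hπ2' : ∀ h s, ∑ a, π2 h s a = 1 := fun h s => (hπ2 h s).2
  have h1 := PD_expSum_eq M hT H β π2
    (fun j s a => val M π1 H j s - qval M π1 H j s a) hπ2'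
  have h2 := PD_expSum_val M H π1 π2 hπ2' H 0 (by omega)
  simp only [Nat.add_zero, Nat.zero_add] at h2
  calc valBar M π1 H β - valBar M π2 H β
      = ∑ s, β s * expSum M H π2
          (fun j s a => val M π1 H j s - qval M π1 H j s a) s := by
        unfold valBar
        rw [← Finset.sum_sub_distrib]
        refine Finset.sum_congr rfl fun s _ => ?_
        rw [h2 s]
        ring
    _ = _ := h1.symm
end

section
/- Let Π be a set of stationary policies and 𝒱 a set of functions S → ℝ. Let M and M̂ be MDP models on the same finite S, A, β, H, and let π = (π_1,…,π_H) be a nonstationary policy such that π_h ∈ Π for every h ∈ [H] and V^π_{M,h} ∈ 𝒱 for every h ∈ {2,…,H+1}. Then |V^π_{M,1} − V^π_{M̂,1}| ≤ H·√(d_{Π,𝒱}(M,M̂)), with the convention that the right-hand side is +∞ when the distortion is infinite. -/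
open Finset

variable {S A : Type*}

open scoped ENNReal

/-- The value-equivalence distortion
`d_{Π,𝒱}(M,Mh) = sup_{π∈Π, V∈𝒱} (max_{s∈S} |B^π_M V(s) − B^π_{Mh} V(s)|)²`,
with values in `[0,∞]`. -/
noncomputable def distortion [Fintype S] [Fintype A] [Nonempty S]
    (Pi : Set (S → A → ℝ)) (Vcl : Set (S → ℝ)) (M Mh : MDPModel S A) : ℝ≥0∞ :=
  ⨆ σ ∈ Pi, ⨆ V ∈ Vcl,
    (ENNReal.ofReal (univ.sup' univ_nonempty fun s => |bellman M σ V s - bellman Mh σ V s|)) ^ 2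


lemma bellman_diff_le [Fintype S] [Fintype A] {Mh : MDPModel S A} (hMh : IsValidModel Mh)
    {σ : S → A → ℝ} (hσ : IsPolicy σ) {V W : S → ℝ} {c : ℝ}
    (hVW : ∀ s, |V s - W s| ≤ c) (s : S) :
    |bellman Mh σ V s - bellman Mh σ W s| ≤ c := by
  have key : ∀ a, |∑ s', Mh.2 s a s' * (V s' - W s')| ≤ c := by
    intro a
    calc |∑ s', Mh.2 s a s' * (V s' - W s')|
        ≤ ∑ s', |Mh.2 s a s' * (V s' - W s')| := Finset.abs_sum_le_sum_abs _ _
      _ = ∑ s', Mh.2 s a s' * |V s' - W s'| := by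
          refine Finset.sum_congr rfl fun s' _ => ?_
          rw [abs_mul, abs_of_nonneg ((hMh.2 s a).1 s')]
      _ ≤ ∑ s', Mh.2 s a s' * c :=
          Finset.sum_le_sum fun s' _ => mul_le_mul_of_nonneg_left (hVW s') ((hMh.2 s a).1 s')
      _ = c := by rw [← Finset.sum_mul, (hMh.2 s a).2, one_mul]
  have hdiff : bellman Mh σ V s - bellman Mh σ W s
      = ∑ a, σ s a * (∑ s', Mh.2 s a s' * (V s' - W s')) := by
    unfold bellman
    rw [← Finset.sum_sub_distrib]
    refine Finset.sum_congr rfl fun a _ => ?_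
    rw [← mul_sub]
    congr 1
    rw [add_sub_add_left_eq_sub, ← Finset.sum_sub_distrib]
    exact Finset.sum_congr rfl fun s' _ => by ring
  rw [hdiff]
  calc |∑ a, σ s a * (∑ s', Mh.2 s a s' * (V s' - W s'))|
      ≤ ∑ a, |σ s a * (∑ s', Mh.2 s a s' * (V s' - W s'))| := Finset.abs_sum_le_sum_abs _ _
    _ = ∑ a, σ s a * |∑ s', Mh.2 s a s' * (V s' - W s')| := by
        refine Finset.sum_congr rfl fun a _ => ?_
        rw [abs_mul, abs_of_nonneg ((hσ s).1 a)]
    _ ≤ ∑ a, σ s a * c :=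
        Finset.sum_le_sum fun a _ => mul_le_mul_of_nonneg_left (key a) ((hσ s).1 a)
    _ = c := by rw [← Finset.sum_mul, (hσ s).2, one_mul]

/-- If every component of `π` lies in `Π` and every value function
`V^π_{M,h}`, `h ∈ {2,…,H+1}`, lies in `𝒱`, then
`|V^π_{M,1} − V^π_{Mh,1}| ≤ H · √(d_{Π,𝒱}(M,Mh))` (in `[0,∞]`). -/
theorem value_gap_le_sqrt_distortion
    [Fintype S] [Fintype A] [Nonempty S] [Nonempty A]
    (H : ℕ) (hH : 1 ≤ H) (β : S → ℝ) (hβ : IsPMF β)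
    (M Mh : MDPModel S A) (hM : IsValidModel M) (hMh : IsValidModel Mh)
    (Pi : Set (S → A → ℝ)) (Vcl : Set (S → ℝ))
    (π : ℕ → S → A → ℝ) (hπ : ∀ h, IsPolicy (π h))
    (hπPi : ∀ h, 1 ≤ h → h ≤ H → π h ∈ Pi)
    (hValV : ∀ h, 2 ≤ h → h ≤ H + 1 → val M π H h ∈ Vcl) :
    ENNReal.ofReal |valBar M π H β - valBar Mh π H β| ≤
      (H : ℝ≥0∞) * distortion Pi Vcl M Mh ^ (1 / 2 : ℝ) := by
  classical
  set D := distortion Pi Vcl M Mh ^ (1 / 2 : ℝ) with hDdef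
  by_cases hfin : distortion Pi Vcl M Mh = ∞
  · have hDtop : D = ∞ := by
      rw [hDdef, hfin, ENNReal.top_rpow_of_pos (by norm_num)]
    rw [hDtop, ENNReal.mul_top (by exact_mod_cast Nat.one_le_iff_ne_zero.mp hH)]
    exact le_top
  · have hDfin : D ≠ ∞ := by
      rw [hDdef]
      exact (ENNReal.rpow_lt_top_of_nonneg (by norm_num) hfin).ne
    set ε := D.toReal with hεdef
    have hε : 0 ≤ ε := ENNReal.toReal_nonneg
    have hkey : ∀ σ ∈ Pi, ∀ V ∈ Vcl, ∀ s,
        |bellman M σ V s - bellman Mh σ V s| ≤ ε := by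
      intro σ hσ V hV s
      set X := univ.sup' univ_nonempty fun s => |bellman M σ V s - bellman Mh σ V s| with hX
      have h2 : (ENNReal.ofReal X) ^ 2 ≤ distortion Pi Vcl M Mh := by
        refine le_trans ?_ (le_iSup₂ (f := fun σ (_ : σ ∈ Pi) => ⨆ V ∈ Vcl,
          (ENNReal.ofReal (univ.sup' univ_nonempty fun s =>
            |bellman M σ V s - bellman Mh σ V s|)) ^ 2) σ hσ)
        exact le_iSup₂ (f := fun V (_ : V ∈ Vcl) =>
          (ENNReal.ofReal (univ.sup' univ_nonempty fun s =>
            |bellman M σ V s - bellman Mh σ V s|)) ^ 2) V hV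
      have h3 : ENNReal.ofReal X ≤ D := by
        have h4 := ENNReal.rpow_le_rpow h2 (by norm_num : (0:ℝ) ≤ 1/2)
        rw [hDdef]
        calc ENNReal.ofReal X
            = ((ENNReal.ofReal X) ^ 2) ^ (1/2 : ℝ) := by
              rw [← ENNReal.rpow_natCast (ENNReal.ofReal X) 2, ← ENNReal.rpow_mul]
              norm_num
          _ ≤ _ := h4
      have h5 : X ≤ ε := (ENNReal.ofReal_le_iff_le_toReal hDfin).mp h3
      exact le_trans (Finset.le_sup' (fun s => |bellman M σ V s - bellman Mh σ V s|) (mem_univ s)) h5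
    have main : ∀ n, n ≤ H → ∀ s,
        |valAux M π H n s - valAux Mh π H n s| ≤ n * ε := by
      intro n
      induction n with
      | zero => intro _ s; simp [valAux]
      | succ n ih =>
        intro hn s
        have hn' : n ≤ H := Nat.le_of_succ_le hn
        have hpol : π (H - n) ∈ Pi := hπPi _ (by omega) (by omega)
        have hval : valAux M π H n ∈ Vcl := by
          have hidx : H + 1 - (H + 1 - n) = n := by omega
          have heq : valAux M π H n = _root_.val M π H (H + 1 - n) := by
            unfold _root_.val; rw [hidx]
          rw [heq]; exact hValV _ (by omega) (by omega)
        have h1 : |bellman M (π (H - n)) (valAux M π H n) s -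
            bellman Mh (π (H - n)) (valAux M π H n) s| ≤ ε :=
          hkey _ hpol _ hval s
        have h2 : |bellman Mh (π (H - n)) (valAux M π H n) s -
            bellman Mh (π (H - n)) (valAux Mh π H n) s| ≤ n * ε :=
          bellman_diff_le hMh (hπ _) (ih hn') s
        show |bellman M (π (H - n)) (valAux M π H n) s -
            bellman Mh (π (H - n)) (valAux Mh π H n) s| ≤ (n + 1 : ℕ) * ε
        have htri := abs_sub_le (bellman M (π (H - n)) (valAux M π H n) s)
          (bellman Mh (π (H - n)) (valAux M π H n) s)
          (bellman Mh (π (H - n)) (valAux Mh π H n) s)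
        push_cast
        linarith
    have hval1 : ∀ (N : MDPModel S A), _root_.val N π H 1 = valAux N π H H := by
      intro N; unfold _root_.val; congr 1
    have hfinal : |valBar M π H β - valBar Mh π H β| ≤ H * ε := by
      unfold valBar
      rw [← Finset.sum_sub_distrib]
      calc |∑ s, (β s * val M π H 1 s - β s * val Mh π H 1 s)|
          ≤ ∑ s, |β s * val M π H 1 s - β s * val Mh π H 1 s| :=
            Finset.abs_sum_le_sum_abs _ _
        _ = ∑ s, β s * |val M π H 1 s - val Mh π H 1 s| := by
            refine Finset.sum_congr rfl fun s _ => ?_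
            rw [← mul_sub, abs_mul, abs_of_nonneg (hβ.1 s)]
        _ ≤ ∑ s, β s * (H * ε) := by
            refine Finset.sum_le_sum fun s _ => mul_le_mul_of_nonneg_left ?_ (hβ.1 s)
            rw [hval1 M, hval1 Mh]
            exact main H le_rfl s
        _ = H * ε := by rw [← Finset.sum_mul, hβ.2, one_mul]
    calc ENNReal.ofReal |valBar M π H β - valBar Mh π H β|
        ≤ ENNReal.ofReal (H * ε) := ENNReal.ofReal_le_ofReal hfinal
      _ = (H : ℝ≥0∞) * ENNReal.ofReal ε := by
          rw [ENNReal.ofReal_mul (by positivity), ENNReal.ofReal_natCast]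
      _ ≤ (H : ℝ≥0∞) * D := mul_le_mul_right ENNReal.ofReal_toReal_le _
end

section
/- Let M and M̂ be MDP models on the same finite S, A, β, H, set ε = max_{h∈[H]} max_{(s,a)∈S×A} |Q*_{M,h}(s,a) − Q*_{M̂,h}(s,a)|, and let π̂ be any nonstationary policy that is optimal for M̂ (for instance, any greedy policy with respect to Q*_{M̂}). Then V*_{M,1} − V^{π̂}_{M,1} ≤ 2Hε. -/
open Finset

variable {S A : Type*}

section OptDefs

variable [Fintype S] [Fintype A] [Nonempty A]

/-- Optimal value with `n` steps to go (auxiliary to `optVal`). -/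
noncomputable def optValAux (M : MDPModel S A) : ℕ → S → ℝ
  | 0 => fun _ => 0
  | n + 1 => fun s =>
      univ.sup' univ_nonempty fun a => M.1 s a + ∑ s', M.2 s a s' * optValAux M n s'

/-- `V*_{M,h}` for horizon `H`: `V*_{M,H+1} = 0`, `V*_{M,h}(s) = max_a Q*_{M,h}(s,a)`. -/
noncomputable def optVal (M : MDPModel S A) (H h : ℕ) : S → ℝ := optValAux M (H + 1 - h)

/-- `Q*_{M,h}(s,a) = R_M(s,a) + Σ_{s'} T_M(s,a)(s') · V*_{M,h+1}(s')`. -/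
noncomputable def optQ (M : MDPModel S A) (H h : ℕ) (s : S) (a : A) : ℝ :=
  M.1 s a + ∑ s', M.2 s a s' * optVal M H (h + 1) s'

/-- The β-averaged optimal value at step 1: `V*_{M,1} = Σ_s β(s) · V*_{M,1}(s)`. -/
noncomputable def optValBar (M : MDPModel S A) (H : ℕ) (β : S → ℝ) : ℝ :=
  ∑ s, β s * optVal M H 1 s

/-- `π` is an optimal nonstationary policy for `M`. -/
noncomputable def IsOptimalPolicy (M : MDPModel S A) (H : ℕ) (π : ℕ → S → A → ℝ) : Prop :=
  ∀ h, 1 ≤ h → h ≤ H + 1 → val M π H h = optVal M H h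

end OptDefs

section AuxLemmas

variable [Fintype S] [Fintype A] [Nonempty A]

lemma optVal_eq_sup (M : MDPModel S A) (H h : ℕ) (hh : h ≤ H) (s : S) :
    optVal M H h s = univ.sup' univ_nonempty (fun a => optQ M H h s a) := by
  have h1 : H + 1 - h = (H - h) + 1 := by omega
  have h2 : H + 1 - (h + 1) = H - h := by omega
  simp only [optVal, optQ, h1, h2, optValAux]

lemma val_step_aux (M : MDPModel S A) (π : ℕ → S → A → ℝ) (H h : ℕ)
    (h1 : 1 ≤ h) (h2 : h ≤ H) :
    val M π H h = bellman M (π h) (val M π H (h + 1)) := by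
  have e1 : H + 1 - h = (H - h) + 1 := by omega
  have e2 : H + 1 - (h + 1) = H - h := by omega
  have e3 : H - (H - h) = h := by omega
  simp only [_root_.val, e1, e2, valAux, e3]

end AuxLemmas

/-- With `ε = max_{h∈[H]} max_{(s,a)} |Q*_{M,h}(s,a) − Q*_{Mh,h}(s,a)|`
and `π̂` any nonstationary policy optimal for `Mh`, one has
`V*_{M,1} − V^{π̂}_{M,1} ≤ 2Hε` for the β-averaged values at step 1. -/
theorem regret_of_optimal_policy_of_close_model
    [Fintype S] [Fintype A] [Nonempty S] [Nonempty A]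
    (H : ℕ) (hH : 1 ≤ H) (β : S → ℝ) (hβ : IsPMF β)
    (M Mh : MDPModel S A) (hM : IsValidModel M) (hMh : IsValidModel Mh)
    (ε : ℝ)
    (hε : ε = (Finset.Icc 1 H).sup' (Finset.nonempty_Icc.mpr hH) fun h =>
      univ.sup' univ_nonempty fun sa : S × A =>
        |optQ M H h sa.1 sa.2 - optQ Mh H h sa.1 sa.2|)
    (πh : ℕ → S → A → ℝ) (hπh : ∀ h, IsPolicy (πh h))
    (hopt : IsOptimalPolicy Mh H πh) :
    optValBar M H β - valBar M πh H β ≤ 2 * H * ε := by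
  have hεbd : ∀ h, 1 ≤ h → h ≤ H → ∀ (s : S) (a : A),
      |optQ M H h s a - optQ Mh H h s a| ≤ ε := by
    intro h h1 h2 s a
    rw [hε]
    calc |optQ M H h s a - optQ Mh H h s a|
        ≤ univ.sup' univ_nonempty (fun sa : S × A =>
            |optQ M H h sa.1 sa.2 - optQ Mh H h sa.1 sa.2|) :=
          Finset.le_sup' (fun sa : S × A =>
            |optQ M H h sa.1 sa.2 - optQ Mh H h sa.1 sa.2|) (Finset.mem_univ (s, a))
      _ ≤ _ := Finset.le_sup' (fun h => univ.sup' univ_nonempty fun sa : S × A =>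
            |optQ M H h sa.1 sa.2 - optQ Mh H h sa.1 sa.2|) (Finset.mem_Icc.mpr ⟨h1, h2⟩)
  have key : ∀ n, n ≤ H → ∀ s, optValAux M n s - valAux M πh H n s ≤ 2 * n * ε := by
    intro n
    induction n with
    | zero => intro _ s; simp [optValAux, valAux]
    | succ n ih =>
      intro hn s
      have h1 : 1 ≤ H - n := by omega
      have h2 : H - n ≤ H := by omega
      set h := H - n with hh
      have en1 : H + 1 - h = n + 1 := by omega
      have en0 : H + 1 - (h + 1) = n := by omega
      have gv : valAux M πh H (n + 1) s = val M πh H h s := by rw [_root_.val, en1]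
      have go : optValAux M (n + 1) s = optVal M H h s := by rw [optVal, en1]
      rw [gv, go]
      have hD : ∀ s', optVal M H (h + 1) s' - val M πh H (h + 1) s' ≤ 2 * n * ε := by
        intro s'
        have := ih (by omega) s'
        rw [optVal, _root_.val, en0]
        exact this
      have step1 : optVal M H h s ≤ optVal Mh H h s + ε := by
        rw [optVal_eq_sup M H h h2 s]
        apply Finset.sup'_le
        intro a _
        have habs := abs_le.mp (hεbd h h1 h2 s a)
        have h3 : optQ Mh H h s a ≤ optVal Mh H h s := by
          rw [optVal_eq_sup Mh H h h2 s]
          exact Finset.le_sup' _ (Finset.mem_univ a)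
        linarith [habs.2]
      have hopth : val Mh πh H h s = optVal Mh H h s := by
        rw [hopt h h1 (by omega)]
      have hopth1 : val Mh πh H (h + 1) = optVal Mh H (h + 1) :=
        hopt (h + 1) (by omega) (by omega)
      have step2 : val Mh πh H h s - val M πh H h s ≤ ε + 2 * n * ε := by
        rw [val_step_aux Mh πh H h h1 h2, val_step_aux M πh H h h1 h2]
        unfold bellman
        rw [← Finset.sum_sub_distrib]
        have hπs := (hπh h) s
        calc ∑ a, (πh h s a * (Mh.1 s a + ∑ s', Mh.2 s a s' * val Mh πh H (h + 1) s')
                 - πh h s a * (M.1 s a + ∑ s', M.2 s a s' * val M πh H (h + 1) s'))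
            ≤ ∑ a, πh h s a * (ε + 2 * n * ε) := by
              apply Finset.sum_le_sum
              intro a _
              rw [← mul_sub]
              apply mul_le_mul_of_nonneg_left _ (hπs.1 a)
              have hTsa := hM.2 s a
              have habs := abs_le.mp (hεbd h h1 h2 s a)
              have d1 : optQ Mh H h s a - optQ M H h s a ≤ ε := by linarith [habs.1]
              have d2 : ∑ s', M.2 s a s' *
                  (optVal M H (h + 1) s' - val M πh H (h + 1) s') ≤ 2 * n * ε := by
                calc ∑ s', M.2 s a s' * (optVal M H (h + 1) s' - val M πh H (h + 1) s')
                    ≤ ∑ s', M.2 s a s' * (2 * n * ε) :=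
                      Finset.sum_le_sum fun s' _ =>
                        mul_le_mul_of_nonneg_left (hD s') (hTsa.1 s')
                  _ = 2 * n * ε := by rw [← Finset.sum_mul, hTsa.2, one_mul]
              have eX : Mh.1 s a + ∑ s', Mh.2 s a s' * val Mh πh H (h + 1) s'
                  = optQ Mh H h s a := by rw [optQ, hopth1]
              have f2 : optQ M H h s a
                  = M.1 s a + ∑ s', M.2 s a s' * optVal M H (h + 1) s' := rfl
              have eD : ∑ s', M.2 s a s' *
                    (optVal M H (h + 1) s' - val M πh H (h + 1) s')
                  = (∑ s', M.2 s a s' * optVal M H (h + 1) s')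
                    - ∑ s', M.2 s a s' * val M πh H (h + 1) s' := by
                rw [← Finset.sum_sub_distrib]
                exact Finset.sum_congr rfl fun s' _ => by ring
              linarith [d1, d2, eX, f2, eD]
          _ = ε + 2 * n * ε := by rw [← Finset.sum_mul, hπs.2, one_mul]
      push_cast
      linarith [step1, hopth, step2]
  have h1H : H + 1 - 1 = H := by omega
  have final : ∀ s, optVal M H 1 s - val M πh H 1 s ≤ 2 * H * ε := by
    intro s
    have := key H le_rfl s
    rw [optVal, _root_.val, h1H]
    exact this
  rw [optValBar, valBar, ← Finset.sum_sub_distrib]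
  calc ∑ s, (β s * optVal M H 1 s - β s * val M πh H 1 s)
      ≤ ∑ s, β s * (2 * H * ε) := by
        apply Finset.sum_le_sum
        intro s _
        rw [← mul_sub]
        exact mul_le_mul_of_nonneg_left (final s) (hβ.1 s)
    _ = 2 * H * ε := by rw [← Finset.sum_mul, hβ.2, one_mul]
end

section
/- Define the optimal-action-value distortion between MDP models by d_{Q*}(M,M̂) = max_{h∈[H]} (max_{(s,a)∈S×A} |Q*_{M,h}(s,a) − Q*_{M̂,h}(s,a)|)². Let (Ω,ℱ,P) be a probability space carrying random MDP models M* and M̃ and a random nonstationary policy π̂ such that, P-almost surely, π̂(ω) is an optimal policy for M̃(ω). If E[d_{Q*}(M*, M̃)] ≤ D for some D ≥ 0, then E[V*_{M*,1} − V^{π̂}_{M*,1}] ≤ 2H√D. -/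
open Finset

variable {S A : Type*}

/-- The optimal-action-value distortion
`d_{Q*}(M,Mh) = max_{h∈[H]} (max_{(s,a)} |Q*_{M,h}(s,a) − Q*_{Mh,h}(s,a)|)²`. -/
noncomputable def dQstar [Fintype S] [Fintype A] [Nonempty S] [Nonempty A]
    (H : ℕ) (M Mh : MDPModel S A) : ℝ :=
  if hH : 1 ≤ H then
    (Finset.Icc 1 H).sup' (Finset.nonempty_Icc.mpr hH) fun h =>
      (univ.sup' univ_nonempty fun sa : S × A =>
        |optQ M H h sa.1 sa.2 - optQ Mh H h sa.1 sa.2|) ^ 2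
  else 0

open MeasureTheory

section AuxLemmas

variable [Fintype S] [Fintype A] [Nonempty S] [Nonempty A]

lemma valAux_mem {M : MDPModel S A} (hM : IsValidModel M) {π : ℕ → S → A → ℝ}
    (hπ : ∀ h, IsPolicy (π h)) (H : ℕ) :
    ∀ (n : ℕ) (s : S), valAux M π H n s ∈ Set.Icc (0 : ℝ) (n : ℝ) := by
  intro n
  induction n with
  | zero => intro s; simp [valAux]
  | succ n ih =>
    intro s
    have hin : ∀ a, 0 ≤ M.1 s a + ∑ s', M.2 s a s' * valAux M π H n s' := by
      intro a
      have h1 : (0:ℝ) ≤ ∑ s', M.2 s a s' * valAux M π H n s' :=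
        Finset.sum_nonneg fun s' _ => mul_nonneg ((hM.2 s a).1 s') (ih s').1
      linarith [(hM.1 s a).1]
    have hub : ∀ a, M.1 s a + ∑ s', M.2 s a s' * valAux M π H n s' ≤ (n : ℝ) + 1 := by
      intro a
      have h1 : ∑ s', M.2 s a s' * valAux M π H n s' ≤ ∑ s', M.2 s a s' * (n : ℝ) :=
        Finset.sum_le_sum fun s' _ => mul_le_mul_of_nonneg_left (ih s').2 ((hM.2 s a).1 s')
      have h2 : ∑ s', M.2 s a s' * (n : ℝ) = (n : ℝ) := by
        rw [← Finset.sum_mul, (hM.2 s a).2, one_mul]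
      linarith [(hM.1 s a).2]
    constructor
    · exact Finset.sum_nonneg fun a _ => mul_nonneg ((hπ _ s).1 a) (hin a)
    · push_cast
      calc valAux M π H (n + 1) s
          ≤ ∑ a, π (H - n) s a * ((n : ℝ) + 1) :=
            Finset.sum_le_sum fun a _ =>
              mul_le_mul_of_nonneg_left (hub a) ((hπ _ s).1 a)
        _ = (n : ℝ) + 1 := by rw [← Finset.sum_mul, (hπ (H - n) s).2, one_mul]

lemma optValAux_mem {M : MDPModel S A} (hM : IsValidModel M) :
    ∀ (n : ℕ) (s : S), optValAux M n s ∈ Set.Icc (0 : ℝ) (n : ℝ) := by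
  intro n
  induction n with
  | zero => intro s; simp [optValAux]
  | succ n ih =>
    intro s
    have hin : ∀ a, 0 ≤ M.1 s a + ∑ s', M.2 s a s' * optValAux M n s' := by
      intro a
      have h1 : (0:ℝ) ≤ ∑ s', M.2 s a s' * optValAux M n s' :=
        Finset.sum_nonneg fun s' _ => mul_nonneg ((hM.2 s a).1 s') (ih s').1
      linarith [(hM.1 s a).1]
    have hub : ∀ a, M.1 s a + ∑ s', M.2 s a s' * optValAux M n s' ≤ (n : ℝ) + 1 := by
      intro a
      have h1 : ∑ s', M.2 s a s' * optValAux M n s' ≤ ∑ s', M.2 s a s' * (n : ℝ) :=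
        Finset.sum_le_sum fun s' _ => mul_le_mul_of_nonneg_left (ih s').2 ((hM.2 s a).1 s')
      have h2 : ∑ s', M.2 s a s' * (n : ℝ) = (n : ℝ) := by
        rw [← Finset.sum_mul, (hM.2 s a).2, one_mul]
      linarith [(hM.1 s a).2]
    constructor
    · show (0:ℝ) ≤ univ.sup' univ_nonempty fun a =>
          M.1 s a + ∑ s', M.2 s a s' * optValAux M n s'
      exact le_trans (hin (Classical.arbitrary A))
        (Finset.le_sup' (fun a => M.1 s a + ∑ s', M.2 s a s' * optValAux M n s')
          (Finset.mem_univ (Classical.arbitrary A)))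
    · show (univ.sup' univ_nonempty fun a =>
          M.1 s a + ∑ s', M.2 s a s' * optValAux M n s') ≤ ((n + 1 : ℕ) : ℝ)
      push_cast
      exact Finset.sup'_le _ _ fun a _ => hub a

/-- The key simulation lemma, by induction on the number of steps to go. -/
lemma key_induction {M Mh : MDPModel S A} (hM : IsValidModel M)
    {π : ℕ → S → A → ℝ} (hπ : ∀ h, IsPolicy (π h)) {H : ℕ}
    (hopt : IsOptimalPolicy Mh H π) {ε : ℝ}
    (hε : ∀ h, 1 ≤ h → h ≤ H → ∀ s a, |optQ M H h s a - optQ Mh H h s a| ≤ ε) :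
    ∀ n, n ≤ H → ∀ s, optValAux M n s - valAux M π H n s ≤ 2 * n * ε := by
  have hopt_aux : ∀ m, m ≤ H → valAux Mh π H m = optValAux Mh m := by
    intro m hm
    have h1 := hopt (H + 1 - m) (by omega) (by omega)
    unfold _root_.val optVal at h1
    rwa [show H + 1 - (H + 1 - m) = m by omega] at h1
  intro n
  induction n with
  | zero => intro _ s; simp [optValAux, valAux]
  | succ n ih =>
    intro hn s
    have hnH : n ≤ H := by omega
    have hεnn : 0 ≤ ε :=
      le_trans (abs_nonneg _)
        (hε 1 le_rfl (by omega) (Classical.arbitrary S) (Classical.arbitrary A))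
    have hq : ∀ (N : MDPModel S A) (s : S) (a : A),
        optQ N H (H - n) s a = N.1 s a + ∑ s', N.2 s a s' * optValAux N n s' := by
      intro N s a
      unfold optQ optVal
      rw [show H + 1 - (H - n + 1) = n by omega]
    have hεn : ∀ (s : S) (a : A),
        |(M.1 s a + ∑ s', M.2 s a s' * optValAux M n s') -
          (Mh.1 s a + ∑ s', Mh.2 s a s' * optValAux Mh n s')| ≤ ε := by
      intro s a
      rw [← hq, ← hq]
      exact hε (H - n) (by omega) (by omega) s a
    -- term 1 : optimal values of the two models are ε-close
    have term1 : optValAux M (n + 1) s - optValAux Mh (n + 1) s ≤ ε := by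
      show (univ.sup' univ_nonempty fun a =>
          M.1 s a + ∑ s', M.2 s a s' * optValAux M n s') -
          optValAux Mh (n + 1) s ≤ ε
      rw [sub_le_iff_le_add]
      apply Finset.sup'_le
      intro a _
      have h1 := abs_le.mp (hεn s a)
      have h2 : Mh.1 s a + ∑ s', Mh.2 s a s' * optValAux Mh n s' ≤ optValAux Mh (n + 1) s :=
        Finset.le_sup' (fun a => Mh.1 s a + ∑ s', Mh.2 s a s' * optValAux Mh n s')
          (Finset.mem_univ a)
      linarith [h1.1, h1.2]
    -- term 2 : compare the policy values on the two models
    have term2 : valAux Mh π H (n + 1) s - valAux M π H (n + 1) s ≤ (2 * n + 1) * ε := by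
      show bellman Mh (π (H - n)) (valAux Mh π H n) s -
          bellman M (π (H - n)) (valAux M π H n) s ≤ (2 * n + 1) * ε
      unfold bellman
      rw [← Finset.sum_sub_distrib]
      have hbound : ∀ a ∈ (univ : Finset A),
          π (H - n) s a * (Mh.1 s a + ∑ s', Mh.2 s a s' * valAux Mh π H n s') -
            π (H - n) s a * (M.1 s a + ∑ s', M.2 s a s' * valAux M π H n s') ≤
          π (H - n) s a * ((2 * n + 1) * ε) := by
        intro a _
        rw [← mul_sub]
        apply mul_le_mul_of_nonneg_left _ ((hπ (H - n) s).1 a)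
        rw [hopt_aux n hnH]
        have hY : (∑ s', M.2 s a s' * optValAux M n s') -
            (∑ s', M.2 s a s' * valAux M π H n s') ≤ 2 * n * ε := by
          rw [← Finset.sum_sub_distrib]
          calc ∑ s', (M.2 s a s' * optValAux M n s' - M.2 s a s' * valAux M π H n s')
              ≤ ∑ s', M.2 s a s' * (2 * n * ε) := by
                apply Finset.sum_le_sum
                intro s' _
                rw [← mul_sub]
                exact mul_le_mul_of_nonneg_left (ih hnH s') ((hM.2 s a).1 s')
            _ = 2 * n * ε := by rw [← Finset.sum_mul, (hM.2 s a).2, one_mul]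
        have h1 := abs_le.mp (hεn s a)
        linarith [h1.1, h1.2]
      calc ∑ a, (π (H - n) s a * (Mh.1 s a + ∑ s', Mh.2 s a s' * valAux Mh π H n s') -
              π (H - n) s a * (M.1 s a + ∑ s', M.2 s a s' * valAux M π H n s'))
          ≤ ∑ a, π (H - n) s a * ((2 * n + 1) * ε) := Finset.sum_le_sum hbound
        _ = (2 * n + 1) * ε := by rw [← Finset.sum_mul, (hπ (H - n) s).2, one_mul]
    have hMh_eq : valAux Mh π H (n + 1) s = optValAux Mh (n + 1) s := by
      rw [hopt_aux (n + 1) hn]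
    push_cast
    have := term1
    have := term2
    nlinarith [term1, term2, hMh_eq]

/-- Pointwise regret bound in terms of `√(dQstar)`. -/
lemma regret_le_sqrt_dQstar {M Mh : MDPModel S A} (hM : IsValidModel M)
    {π : ℕ → S → A → ℝ} (hπ : ∀ h, IsPolicy (π h)) {H : ℕ} (hH : 1 ≤ H)
    (hopt : IsOptimalPolicy Mh H π) {β : S → ℝ} (hβ : IsPMF β) :
    optValBar M H β - valBar M π H β ≤ 2 * H * Real.sqrt (dQstar H M Mh) := by
  set ε := Real.sqrt (dQstar H M Mh) with hε_def
  have hε : ∀ h, 1 ≤ h → h ≤ H → ∀ s a, |optQ M H h s a - optQ Mh H h s a| ≤ ε := by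
    intro h h1 h2 s a
    have hsq : |optQ M H h s a - optQ Mh H h s a| ^ 2 ≤ dQstar H M Mh := by
      rw [dQstar, dif_pos hH]
      refine le_trans ?_ (Finset.le_sup' _ (Finset.mem_Icc.mpr ⟨h1, h2⟩))
      have habs : |optQ M H h s a - optQ Mh H h s a| ≤
          univ.sup' univ_nonempty fun sa : S × A =>
            |optQ M H h sa.1 sa.2 - optQ Mh H h sa.1 sa.2| :=
        Finset.le_sup' (f := fun sa : S × A => |optQ M H h sa.1 sa.2 - optQ Mh H h sa.1 sa.2|)
          (Finset.mem_univ (s, a))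
      exact pow_le_pow_left₀ (abs_nonneg _) habs 2
    calc |optQ M H h s a - optQ Mh H h s a|
        = Real.sqrt (|optQ M H h s a - optQ Mh H h s a| ^ 2) := by
          rw [Real.sqrt_sq (abs_nonneg _)]
      _ ≤ ε := Real.sqrt_le_sqrt hsq
  have hkey := key_induction hM hπ hopt hε H le_rfl
  have hvals : ∀ s, optVal M H 1 s - val M π H 1 s ≤ 2 * H * ε := by
    intro s
    have h1 : optVal M H 1 s = optValAux M H s := by
      unfold optVal; rw [show H + 1 - 1 = H by omega]
    have h2 : val M π H 1 s = valAux M π H H s := by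
      unfold _root_.val; rw [show H + 1 - 1 = H by omega]
    rw [h1, h2]
    exact hkey s
  unfold optValBar valBar
  rw [← Finset.sum_sub_distrib]
  calc ∑ s, (β s * optVal M H 1 s - β s * val M π H 1 s)
      ≤ ∑ s, β s * (2 * H * ε) := by
        apply Finset.sum_le_sum
        intro s _
        rw [← mul_sub]
        exact mul_le_mul_of_nonneg_left (hvals s) (hβ.1 s)
    _ = 2 * H * ε := by rw [← Finset.sum_mul, hβ.2, one_mul]

end AuxLemmas

section MeasAux

variable [Fintype S] [Fintype A] [Nonempty S] [Nonempty A]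
variable {Ω : Type*} [MeasurableSpace Ω]

lemma measurable_model_R {M : Ω → MDPModel S A} (hM : Measurable M) (s : S) (a : A) :
    Measurable fun ω => (M ω).1 s a :=
  (measurable_pi_apply a).comp ((measurable_pi_apply s).comp hM.fst)

lemma measurable_model_T {M : Ω → MDPModel S A} (hM : Measurable M) (s : S) (a : A) (s' : S) :
    Measurable fun ω => (M ω).2 s a s' :=
  (measurable_pi_apply s').comp
    ((measurable_pi_apply a).comp ((measurable_pi_apply s).comp hM.snd))

lemma measurable_valAux {M : Ω → MDPModel S A} (hM : Measurable M)
    {π : Ω → ℕ → S → A → ℝ} (hπ : Measurable π) (H : ℕ) :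
    ∀ n s, Measurable fun ω => valAux (M ω) (π ω) H n s := by
  intro n
  induction n with
  | zero => intro s; simp only [valAux]; exact measurable_const
  | succ n ih =>
    intro s
    show Measurable fun ω => bellman (M ω) (π ω (H - n)) (valAux (M ω) (π ω) H n) s
    unfold bellman
    apply Finset.measurable_sum
    intro a _
    have hπa : Measurable fun ω => π ω (H - n) s a :=
      (measurable_pi_apply a).comp ((measurable_pi_apply s).comp
        ((measurable_pi_apply (H - n)).comp hπ))
    refine hπa.mul (Measurable.add (measurable_model_R hM s a) ?_)
    exact Finset.measurable_sum _ fun s' _ => (measurable_model_T hM s a s').mul (ih s')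

lemma measurable_optValAux {M : Ω → MDPModel S A} (hM : Measurable M) :
    ∀ n s, Measurable fun ω => optValAux (M ω) n s := by
  intro n
  induction n with
  | zero => intro s; simp only [optValAux]; exact measurable_const
  | succ n ih =>
    intro s
    show Measurable fun ω => univ.sup' univ_nonempty fun a =>
      (M ω).1 s a + ∑ s', (M ω).2 s a s' * optValAux (M ω) n s'
    have : (fun ω => univ.sup' univ_nonempty fun a =>
        (M ω).1 s a + ∑ s', (M ω).2 s a s' * optValAux (M ω) n s') =
        (univ.sup' univ_nonempty fun a ω =>
          (M ω).1 s a + ∑ s', (M ω).2 s a s' * optValAux (M ω) n s') := by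
      funext ω
      rw [Finset.sup'_apply]
    rw [this]
    apply Finset.measurable_sup'
    intro a _
    exact (measurable_model_R hM s a).add
      (Finset.measurable_sum _ fun s' _ => (measurable_model_T hM s a s').mul (ih s'))

lemma measurable_optQ {M : Ω → MDPModel S A} (hM : Measurable M) (H h : ℕ) (s : S) (a : A) :
    Measurable fun ω => optQ (M ω) H h s a := by
  unfold optQ optVal
  exact (measurable_model_R hM s a).add
    (Finset.measurable_sum _ fun s' _ =>
      (measurable_model_T hM s a s').mul (measurable_optValAux hM _ s'))

lemma measurable_dQstar {M Mh : Ω → MDPModel S A} (hM : Measurable M) (hMh : Measurable Mh)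
    (H : ℕ) : Measurable fun ω => dQstar H (M ω) (Mh ω) := by
  unfold dQstar
  by_cases hH : 1 ≤ H
  · simp only [dif_pos hH]
    have : (fun ω => (Finset.Icc 1 H).sup' (Finset.nonempty_Icc.mpr hH) fun h =>
        (univ.sup' univ_nonempty fun sa : S × A =>
          |optQ (M ω) H h sa.1 sa.2 - optQ (Mh ω) H h sa.1 sa.2|) ^ 2) =
        ((Finset.Icc 1 H).sup' (Finset.nonempty_Icc.mpr hH) fun h ω =>
        (univ.sup' univ_nonempty fun sa : S × A =>
          |optQ (M ω) H h sa.1 sa.2 - optQ (Mh ω) H h sa.1 sa.2|) ^ 2) := by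
      funext ω; rw [Finset.sup'_apply]
    rw [this]
    apply Finset.measurable_sup'
    intro h _
    apply Measurable.pow_const
    have : (fun ω => univ.sup' univ_nonempty fun sa : S × A =>
        |optQ (M ω) H h sa.1 sa.2 - optQ (Mh ω) H h sa.1 sa.2|) =
        (univ.sup' univ_nonempty fun (sa : S × A) ω =>
        |optQ (M ω) H h sa.1 sa.2 - optQ (Mh ω) H h sa.1 sa.2|) := by
      funext ω; rw [Finset.sup'_apply]
    rw [this]
    apply Finset.measurable_sup'
    intro sa _
    exact ((measurable_optQ hM H h sa.1 sa.2).sub (measurable_optQ hMh H h sa.1 sa.2)).abs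
  · simp only [dif_neg hH]; exact measurable_const

lemma dQstar_nonneg {M Mh : MDPModel S A} (H : ℕ) : 0 ≤ dQstar H M Mh := by
  unfold dQstar
  by_cases hH : 1 ≤ H
  · simp only [dif_pos hH]
    exact le_trans (sq_nonneg ((univ.sup' univ_nonempty fun sa : S × A =>
        |optQ M H 1 sa.1 sa.2 - optQ Mh H 1 sa.1 sa.2|))) (Finset.le_sup'
        (fun h => (univ.sup' univ_nonempty fun sa : S × A =>
        |optQ M H h sa.1 sa.2 - optQ Mh H h sa.1 sa.2|) ^ 2)
        (Finset.mem_Icc.mpr ⟨le_rfl, hH⟩))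
  · simp [dif_neg hH]

lemma dQstar_le {M Mh : MDPModel S A} (hM : IsValidModel M) (hMh : IsValidModel Mh) (H : ℕ) :
    dQstar H M Mh ≤ (2 * H + 2) ^ 2 := by
  unfold dQstar
  by_cases hH : 1 ≤ H
  · simp only [dif_pos hH]
    apply Finset.sup'_le
    intro h _
    have habs : (univ.sup' univ_nonempty fun sa : S × A =>
        |optQ M H h sa.1 sa.2 - optQ Mh H h sa.1 sa.2|) ≤ 2 * H + 2 := by
      apply Finset.sup'_le
      intro sa _
      have hb : ∀ (N : MDPModel S A), IsValidModel N → ∀ s a,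
          optQ N H h s a ∈ Set.Icc (0:ℝ) (H + 1) := by
        intro N hN s a
        unfold optQ optVal
        have h1 := fun s' => optValAux_mem hN (H + 1 - (h + 1)) s'
        constructor
        · have : (0:ℝ) ≤ ∑ s', N.2 s a s' * optValAux N (H + 1 - (h + 1)) s' :=
            Finset.sum_nonneg fun s' _ => mul_nonneg ((hN.2 s a).1 s') (h1 s').1
          linarith [(hN.1 s a).1]
        · have h2 : ∑ s', N.2 s a s' * optValAux N (H + 1 - (h + 1)) s' ≤
              ∑ s', N.2 s a s' * (H : ℝ) := by
            apply Finset.sum_le_sum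
            intro s' _
            refine mul_le_mul_of_nonneg_left (le_trans (h1 s').2 ?_) ((hN.2 s a).1 s')
            exact Nat.cast_le.mpr (by omega)
          have h3 : ∑ s', N.2 s a s' * (H : ℝ) = (H : ℝ) := by
            rw [← Finset.sum_mul, (hN.2 s a).2, one_mul]
          linarith [(hN.1 s a).2]
      have hb1 := hb M hM sa.1 sa.2
      have hb2 := hb Mh hMh sa.1 sa.2
      rw [abs_le]
      constructor <;> [skip; skip] <;>
        · obtain ⟨l1, u1⟩ := hb1; obtain ⟨l2, u2⟩ := hb2; nlinarith [Nat.cast_nonneg (α := ℝ) H]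
    have hnn : (0:ℝ) ≤ univ.sup' univ_nonempty fun sa : S × A =>
        |optQ M H h sa.1 sa.2 - optQ Mh H h sa.1 sa.2| :=
      le_trans (abs_nonneg _)
        (Finset.le_sup' (fun sa : S × A => |optQ M H h sa.1 sa.2 - optQ Mh H h sa.1 sa.2|)
          (Finset.mem_univ (Classical.arbitrary (S × A))))
    exact pow_le_pow_left₀ hnn habs 2
  · simp only [dif_neg hH]
    positivity

end MeasAux

/-- Let `M⋆`, `Mt` be random MDP models and `π̂` a random
nonstationary policy that is almost surely optimal for `Mt`.  If
`E[d_{Q*}(M⋆, Mt)] ≤ D` then `E[V*_{M⋆,1} − V^{π̂}_{M⋆,1}] ≤ 2H√D`. -/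
theorem expected_regret_le_sqrt_dQstar
    [Fintype S] [Fintype A] [Nonempty S] [Nonempty A]
    (H : ℕ) (hH : 1 ≤ H) (β : S → ℝ) (hβ : IsPMF β)
    {Ω : Type*} [MeasurableSpace Ω] (P : Measure Ω) [IsProbabilityMeasure P]
    (Mstar Mt : Ω → MDPModel S A) (hMstar : Measurable Mstar) (hMt : Measurable Mt)
    (hMstarValid : ∀ ω, IsValidModel (Mstar ω)) (hMtValid : ∀ ω, IsValidModel (Mt ω))
    (πh : Ω → ℕ → S → A → ℝ) (hπmeas : Measurable πh)
    (hπpol : ∀ ω, ∀ h, IsPolicy (πh ω h))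
    (hπopt : ∀ᵐ ω ∂P, IsOptimalPolicy (Mt ω) H (πh ω))
    (D : ℝ) (hD : 0 ≤ D)
    (hdist : ∫ ω, dQstar H (Mstar ω) (Mt ω) ∂P ≤ D) :
    ∫ ω, (optValBar (Mstar ω) H β - valBar (Mstar ω) (πh ω) H β) ∂P ≤
      2 * H * Real.sqrt D := by
  set f : Ω → ℝ := fun ω => dQstar H (Mstar ω) (Mt ω) with hf_def
  set g : Ω → ℝ := fun ω => optValBar (Mstar ω) H β - valBar (Mstar ω) (πh ω) H β with hg_def
  have hf_meas : Measurable f := measurable_dQstar hMstar hMt H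
  have hf_nonneg : ∀ ω, 0 ≤ f ω := fun ω => dQstar_nonneg H
  have hf_bdd : ∀ ω, f ω ≤ (2 * H + 2) ^ 2 := fun ω =>
    dQstar_le (hMstarValid ω) (hMtValid ω) H
  have hf_int : Integrable f P := by
    refine ⟨hf_meas.aestronglyMeasurable, ?_⟩
    apply (hasFiniteIntegral_const ((2 * (H:ℝ) + 2) ^ 2)).mono'
    exact Filter.Eventually.of_forall fun ω => by
      rw [Real.norm_eq_abs, abs_of_nonneg (hf_nonneg ω)]
      exact hf_bdd ω
  have hg_meas : Measurable g := by
    apply Measurable.sub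
    · unfold optValBar
      apply Finset.measurable_sum
      intro s _
      apply Measurable.const_mul
      unfold optVal
      exact measurable_optValAux hMstar _ s
    · unfold valBar
      apply Finset.measurable_sum
      intro s _
      apply Measurable.const_mul
      unfold _root_.val
      exact measurable_valAux hMstar hπmeas H _ s
  have hg_bdd : ∀ ω, |g ω| ≤ (H : ℝ) := by
    intro ω
    have h1 : ∀ s, optVal (Mstar ω) H 1 s ∈ Set.Icc (0:ℝ) H := by
      intro s
      have := optValAux_mem (hMstarValid ω) (H + 1 - 1) s
      rw [show H + 1 - 1 = H by omega] at this
      exact_mod_cast this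
    have h2 : ∀ s, val (Mstar ω) (πh ω) H 1 s ∈ Set.Icc (0:ℝ) H := by
      intro s
      have := valAux_mem (hMstarValid ω) (hπpol ω) H (H + 1 - 1) s
      rw [show H + 1 - 1 = H by omega] at this
      exact_mod_cast this
    have hub : g ω ≤ (H : ℝ) := by
      show optValBar (Mstar ω) H β - valBar (Mstar ω) (πh ω) H β ≤ (H : ℝ)
      unfold optValBar valBar
      rw [← Finset.sum_sub_distrib]
      calc ∑ s, (β s * optVal (Mstar ω) H 1 s - β s * val (Mstar ω) (πh ω) H 1 s)
          ≤ ∑ s, β s * (H : ℝ) := by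
            apply Finset.sum_le_sum
            intro s _
            rw [← mul_sub]
            refine mul_le_mul_of_nonneg_left ?_ (hβ.1 s)
            linarith [(h1 s).2, (h2 s).1]
        _ = (H : ℝ) := by rw [← Finset.sum_mul, hβ.2, one_mul]
    have hlb : -(H : ℝ) ≤ g ω := by
      show -(H : ℝ) ≤ optValBar (Mstar ω) H β - valBar (Mstar ω) (πh ω) H β
      unfold optValBar valBar
      rw [← Finset.sum_sub_distrib]
      have : ∑ s, β s * (-(H : ℝ)) ≤
          ∑ s, (β s * optVal (Mstar ω) H 1 s - β s * val (Mstar ω) (πh ω) H 1 s) := by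
        apply Finset.sum_le_sum
        intro s _
        rw [← mul_sub]
        refine mul_le_mul_of_nonneg_left ?_ (hβ.1 s)
        linarith [(h1 s).1, (h2 s).2]
      calc -(H : ℝ) = ∑ s, β s * (-(H : ℝ)) := by
            rw [← Finset.sum_mul, hβ.2, one_mul]
        _ ≤ _ := this
    rw [abs_le]
    exact ⟨hlb, hub⟩
  have hg_int : Integrable g P := by
    refine ⟨hg_meas.aestronglyMeasurable, ?_⟩
    apply (hasFiniteIntegral_const ((H : ℝ))).mono'
    exact Filter.Eventually.of_forall fun ω => hg_bdd ω
  -- pointwise a.e. bound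
  have hae : ∀ᵐ ω ∂P, g ω ≤ 2 * H * Real.sqrt (f ω) := by
    filter_upwards [hπopt] with ω hω
    exact regret_le_sqrt_dQstar (hMstarValid ω) (hπpol ω) hH hω hβ
  have hsf_meas : Measurable fun ω => Real.sqrt (f ω) := hf_meas.sqrt
  have hsf_int : Integrable (fun ω => Real.sqrt (f ω)) P := by
    refine ⟨hsf_meas.aestronglyMeasurable, ?_⟩
    apply (hasFiniteIntegral_const (2 * (H:ℝ) + 2)).mono'
    refine Filter.Eventually.of_forall fun ω => ?_
    rw [Real.norm_eq_abs, abs_of_nonneg (Real.sqrt_nonneg _)]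
    calc Real.sqrt (f ω) ≤ Real.sqrt ((2 * (H:ℝ) + 2) ^ 2) := Real.sqrt_le_sqrt (hf_bdd ω)
      _ = 2 * (H:ℝ) + 2 := Real.sqrt_sq (by positivity)
  have step1 : ∫ ω, g ω ∂P ≤ ∫ ω, 2 * H * Real.sqrt (f ω) ∂P := by
    apply integral_mono_ae hg_int _ hae
    exact (hsf_int.const_mul _)
  have step2 : ∫ ω, 2 * H * Real.sqrt (f ω) ∂P = 2 * H * ∫ ω, Real.sqrt (f ω) ∂P :=
    integral_const_mul _ _
  have step3 : ∫ ω, Real.sqrt (f ω) ∂P ≤ Real.sqrt D := by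
    rcases eq_or_lt_of_le hD with hD0 | hDpos
    · -- D = 0 : then f = 0 a.e.
      have hint_f : ∫ ω, f ω ∂P ≤ 0 := by rw [← hD0] at hdist; exact hdist
      have hf0 : f =ᵐ[P] 0 := by
        have h1 : 0 ≤ ∫ ω, f ω ∂P := integral_nonneg hf_nonneg
        have h2 : ∫ ω, f ω ∂P = 0 := le_antisymm hint_f h1
        exact (integral_eq_zero_iff_of_nonneg hf_nonneg hf_int).mp h2
      have : (fun ω => Real.sqrt (f ω)) =ᵐ[P] 0 := by
        filter_upwards [hf0] with ω hω
        simp [hω]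
      rw [integral_congr_ae this]
      simp [Real.sqrt_nonneg]
    · -- D > 0 : AM-GM trick  √x ≤ (x + D) / (2√D)
      have hsD : 0 < Real.sqrt D := Real.sqrt_pos.mpr hDpos
      have hpt : ∀ ω, Real.sqrt (f ω) ≤ (f ω + D) / (2 * Real.sqrt D) := by
        intro ω
        rw [le_div_iff₀ (by positivity)]
        have h1 : Real.sqrt (f ω) ^ 2 = f ω := Real.sq_sqrt (hf_nonneg ω)
        have h2 : Real.sqrt D ^ 2 = D := Real.sq_sqrt hD
        nlinarith [sq_nonneg (Real.sqrt (f ω) - Real.sqrt D), Real.sqrt_nonneg (f ω)]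
      have hint2 : ∫ ω, Real.sqrt (f ω) ∂P ≤ ∫ ω, (f ω + D) / (2 * Real.sqrt D) ∂P := by
        apply integral_mono hsf_int _ hpt
        exact (hf_int.add (integrable_const D)).div_const _
      have hint3 : ∫ ω, (f ω + D) / (2 * Real.sqrt D) ∂P =
          ((∫ ω, f ω ∂P) + D) / (2 * Real.sqrt D) := by
        rw [integral_div, integral_add hf_int (integrable_const D), integral_const]
        simp
      calc ∫ ω, Real.sqrt (f ω) ∂P ≤ ((∫ ω, f ω ∂P) + D) / (2 * Real.sqrt D) := by
            rw [← hint3]; exact hint2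
        _ ≤ (D + D) / (2 * Real.sqrt D) := by
            apply div_le_div_of_nonneg_right _ (by positivity)
            · linarith [hdist]
        _ = D / Real.sqrt D := by ring
        _ = Real.sqrt D := Real.div_sqrt
  calc ∫ ω, g ω ∂P ≤ 2 * H * ∫ ω, Real.sqrt (f ω) ∂P := by rw [← step2]; exact step1
    _ ≤ 2 * H * Real.sqrt D := by
        apply mul_le_mul_of_nonneg_left step3 (by positivity)
end

section
/- Let X and Z be nonempty finite types, f : X → Z a function, and ℓ : Z × Z → ℝ a nonnegative function with ℓ(z,z) = 0 for every z. Let p be a probability distribution on X, and let q be a probability distribution on X × X whose first marginal equals p, whose expected distortion Σ_{(x,x̂)} q(x,x̂)·ℓ(f(x), f(x̂)) equals 0, and which minimizes the mutual information I(q) among all probability distributions on X × X with first marginal p and expected distortion 0. Then the two coordinates are conditionally independent given f of the first coordinate: for all x, x̂ ∈ X, q(x,x̂)·m(f(x)) = p(x)·r(f(x), x̂), where m(z) = Σ_{x' : f(x') = z} p(x') and r(z, x̂) = Σ_{x' : f(x') = z} q(x', x̂). -/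
open Finset

/-- A probability distribution on the finite type `X`. -/
def FinDist {X : Type*} [Fintype X] (p : X → ℝ) : Prop :=
  (∀ x, 0 ≤ p x) ∧ ∑ x, p x = 1

/-- Mutual information of a joint distribution `q` on `X × Y` (natural logarithm),
summing over the pairs with `q (x,y) > 0`. -/
noncomputable def mutualInfo {X Y : Type*} [Fintype X] [Fintype Y] (q : X × Y → ℝ) : ℝ :=
  ∑ xy : X × Y,
    if 0 < q xy then
      q xy * Real.log (q xy / ((∑ y, q (xy.1, y)) * (∑ x, q (x, xy.2)))) else 0

section Aux

variable {X Z : Type*} [Fintype X] [Fintype Z] [DecidableEq Z]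

/-- Marginal of `p` pushed forward along `f`. -/
noncomputable def mA (f : X → Z) (p : X → ℝ) (z : Z) : ℝ :=
  ∑ x' ∈ univ.filter (fun x' => f x' = z), p x'

/-- Joint distribution of `f` of the first coordinate and the second coordinate. -/
noncomputable def rA (f : X → Z) (q : X × X → ℝ) (z : Z) (xh : X) : ℝ :=
  ∑ x' ∈ univ.filter (fun x' => f x' = z), q (x', xh)

/-- The conditionally independent coupling built from `p` and `rA`. -/
noncomputable def qA (f : X → Z) (p : X → ℝ) (q : X × X → ℝ) (xy : X × X) : ℝ :=
  p xy.1 * (rA f q (f xy.1) xy.2 / mA f p (f xy.1))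

lemma fiber_mul (f : X → Z) (G : Z → ℝ) (H : X → ℝ) :
    ∑ x, G (f x) * H x = ∑ z, G z * ∑ x ∈ univ.filter (fun x => f x = z), H x := by
  rw [← Finset.sum_fiberwise univ f (fun x => G (f x) * H x)]
  refine Finset.sum_congr rfl fun z _ => ?_
  rw [Finset.mul_sum]
  refine Finset.sum_congr rfl fun x hx => ?_
  rw [(Finset.mem_filter.mp hx).2]

lemma fiber_mul_m (f : X → Z) (p : X → ℝ) (G : Z → ℝ) :
    ∑ x, G (f x) * p x = ∑ z, G z * mA f p z := by
  unfold mA; exact fiber_mul f G p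

lemma fiber_mul_r (f : X → Z) (q : X × X → ℝ) (xh : X) (G : Z → ℝ) :
    ∑ x, G (f x) * q (x, xh) = ∑ z, G z * rA f q z xh := by
  unfold rA; exact fiber_mul f G (fun x => q (x, xh))

end Aux

/-- information bottleneck at zero distortion.  If `q` has first
marginal `p`, zero expected distortion under `(x,x̂) ↦ ℓ(f x, f x̂)`, and minimal mutual
information among all such distributions, then the two coordinates of `q` are
conditionally independent given `f` of the first coordinate:
`q(x,x̂) · m(f x) = p(x) · r(f x, x̂)` where `m(z) = Σ_{x' : f x' = z} p x'` and
`r(z,x̂) = Σ_{x' : f x' = z} q (x',x̂)`. -/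
theorem zero_distortion_minimizer_markov
    {X Z : Type*} [Fintype X] [Nonempty X] [Fintype Z] [Nonempty Z] [DecidableEq Z]
    (f : X → Z) (ℓ : Z × Z → ℝ) (hℓ : ∀ z zh, 0 ≤ ℓ (z, zh)) (hℓ0 : ∀ z, ℓ (z, z) = 0)
    (p : X → ℝ) (hp : FinDist p)
    (q : X × X → ℝ) (hq : FinDist q)
    (hmarg : ∀ x, ∑ xh, q (x, xh) = p x)
    (hdist : ∑ xy : X × X, q xy * ℓ (f xy.1, f xy.2) = 0)
    (hmin : ∀ q' : X × X → ℝ, FinDist q' → (∀ x, ∑ xh, q' (x, xh) = p x) →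
      (∑ xy : X × X, q' xy * ℓ (f xy.1, f xy.2)) = 0 → mutualInfo q ≤ mutualInfo q') :
    ∀ x xh : X,
      q (x, xh) * (∑ x' ∈ univ.filter (fun x' => f x' = f x), p x') =
        p x * (∑ x' ∈ univ.filter (fun x' => f x' = f x), q (x', xh)) := by
  obtain ⟨hq0, hq1⟩ := hq
  obtain ⟨hp0, hp1⟩ := hp
  -- basic positivity facts
  have hm0 : ∀ z, 0 ≤ mA f p z := fun z => Finset.sum_nonneg fun _ _ => hp0 _
  have hr0 : ∀ z xh, 0 ≤ rA f q z xh := fun z xh => Finset.sum_nonneg fun _ _ => hq0 _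
  have hpm : ∀ x, p x ≤ mA f p (f x) := fun x =>
    Finset.single_le_sum (f := p) (fun _ _ => hp0 _) (by simp)
  have hqr : ∀ x xh, q (x, xh) ≤ rA f q (f x) xh := fun x xh =>
    Finset.single_le_sum (f := fun x' => q (x', xh)) (fun _ _ => hq0 _) (by simp)
  have hqp : ∀ x xh, q (x, xh) ≤ p x := fun x xh => by
    rw [← hmarg x]
    exact Finset.single_le_sum (f := fun xh' => q (x, xh')) (fun _ _ => hq0 _) (mem_univ xh)
  have hrm : ∀ z xh, rA f q z xh ≤ mA f p z := fun z xh =>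
    Finset.sum_le_sum fun x' hx' => hqp x' xh
  have hsum_r : ∀ z, ∑ xh, rA f q z xh = mA f p z := by
    intro z
    unfold rA mA
    rw [Finset.sum_comm]
    exact Finset.sum_congr rfl fun x' _ => hmarg x'
  have hsum_r2 : ∀ xh, ∑ z, rA f q z xh = ∑ x', q (x', xh) :=
    fun xh => Finset.sum_fiberwise univ f (fun x' => q (x', xh))
  have hrq2 : ∀ z xh, rA f q z xh ≤ ∑ x', q (x', xh) := fun z xh => by
    rw [← hsum_r2 xh]
    exact Finset.single_le_sum (f := fun z' => rA f q z' xh) (fun _ _ => hr0 _ _) (mem_univ z)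
  -- pointwise zero distortion
  have hqell : ∀ xy : X × X, q xy * ℓ (f xy.1, f xy.2) = 0 := by
    have h := (Finset.sum_eq_zero_iff_of_nonneg
      (fun xy _ => mul_nonneg (hq0 xy) (hℓ _ _))).mp hdist
    exact fun xy => h xy (mem_univ xy)
  -- q' := qA f p q is feasible
  have hq'0 : ∀ xy, 0 ≤ qA f p q xy := fun xy =>
    mul_nonneg (hp0 _) (div_nonneg (hr0 _ _) (hm0 _))
  have hrow : ∀ x, ∑ xh, qA f p q (x, xh) = p x := by
    intro x
    show ∑ xh, p x * (rA f q (f x) xh / mA f p (f x)) = p x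
    rw [← Finset.mul_sum, ← Finset.sum_div, hsum_r]
    by_cases h : mA f p (f x) = 0
    · have hpx : p x = 0 := le_antisymm (h ▸ hpm x) (hp0 x)
      simp [hpx]
    · rw [div_self h, mul_one]
  have hq'1 : ∑ xy : X × X, qA f p q xy = 1 := by
    rw [Fintype.sum_prod_type, ← hp1]
    exact Finset.sum_congr rfl fun x _ => hrow x
  have hdist' : ∑ xy : X × X, qA f p q xy * ℓ (f xy.1, f xy.2) = 0 := by
    refine Finset.sum_eq_zero fun xy _ => ?_
    rcases eq_or_lt_of_le (hq'0 xy) with h | h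
    · rw [← h, zero_mul]
    · have hrpos : rA f q (f xy.1) xy.2 ≠ 0 := by
        intro h0
        rw [qA, h0] at h
        simp at h
      obtain ⟨x', hx'mem, hx'⟩ := Finset.exists_ne_zero_of_sum_ne_zero hrpos
      have hfx : f x' = f xy.1 := (Finset.mem_filter.mp hx'mem).2
      have hz : ℓ (f x', f xy.2) = 0 := by
        rcases mul_eq_zero.mp (hqell (x', xy.2)) with h1 | h1
        · exact absurd h1 hx'
        · exact h1
      rw [← hfx, hz, mul_zero]
  have hIle : mutualInfo q ≤ mutualInfo (qA f p q) := hmin _ ⟨hq'0, hq'1⟩ hrow hdist'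
  -- the Gibbs term
  set T : X × X → ℝ := fun xy =>
    if 0 < q xy then
      q xy * Real.log (q xy * mA f p (f xy.1) / (p xy.1 * rA f q (f xy.1) xy.2)) else 0
    with hT
  set c : Z → X → ℝ := fun z xh =>
    Real.log (rA f q z xh / (mA f p z * ∑ x', q (x', xh))) with hc
  -- sum of the slack terms is 0
  have hsum_S : ∑ xy : X × X, (q xy - qA f p q xy) = 0 := by
    rw [Finset.sum_sub_distrib, hq1, hq'1, sub_self]
  -- termwise Gibbs inequality
  have hTS : ∀ xy : X × X, q xy - qA f p q xy ≤ T xy := by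
    rintro ⟨x, xh⟩
    by_cases hqxy : 0 < q (x, xh)
    · have hppos : 0 < p x := lt_of_lt_of_le hqxy (hqp x xh)
      have hrpos : 0 < rA f q (f x) xh := lt_of_lt_of_le hqxy (hqr x xh)
      have hmpos : 0 < mA f p (f x) := lt_of_lt_of_le hppos (hpm x)
      have hupos : 0 < q (x, xh) * mA f p (f x) / (p x * rA f q (f x) xh) := by positivity
      have hlog := Real.one_sub_inv_le_log_of_pos hupos
      have hkey : q (x, xh) - qA f p q (x, xh) =
          q (x, xh) * (1 - (q (x, xh) * mA f p (f x) / (p x * rA f q (f x) xh))⁻¹) := by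
        show q (x, xh) - p x * (rA f q (f x) xh / mA f p (f x)) = _
        field_simp
      have hTval : T (x, xh) =
          q (x, xh) * Real.log (q (x, xh) * mA f p (f x) / (p x * rA f q (f x) xh)) := by
        show (if 0 < q (x, xh) then _ else _) = _
        rw [if_pos hqxy]
      rw [hkey, hTval]
      exact mul_le_mul_of_nonneg_left hlog (le_of_lt hqxy)
    · have hq0' : q (x, xh) = 0 := le_antisymm (not_lt.mp hqxy) (hq0 _)
      have hTval : T (x, xh) = 0 := by
        show (if 0 < q (x, xh) then _ else (0:ℝ)) = 0
        rw [if_neg hqxy]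
      rw [hTval, hq0', zero_sub]
      linarith [hq'0 (x, xh)]
  -- second marginal of q' equals that of q
  have hcol : ∀ xh, ∑ x', qA f p q (x', xh) = ∑ x', q (x', xh) := by
    intro xh
    calc ∑ x', qA f p q (x', xh)
        = ∑ x', (fun z => rA f q z xh / mA f p z) (f x') * p x' := by
          refine Finset.sum_congr rfl fun x' _ => ?_
          show p x' * (rA f q (f x') xh / mA f p (f x')) = _
          dsimp only
          ring
      _ = ∑ z, (fun z => rA f q z xh / mA f p z) z * mA f p z :=
          fiber_mul_m f p (fun z => rA f q z xh / mA f p z)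
      _ = ∑ z, rA f q z xh := by
          refine Finset.sum_congr rfl fun z _ => ?_
          dsimp only
          by_cases hz : mA f p z = 0
          · have : rA f q z xh = 0 := le_antisymm (hz ▸ hrm z xh) (hr0 z xh)
            simp [this, hz]
          · rw [div_mul_cancel₀ _ hz]
      _ = ∑ x', q (x', xh) := hsum_r2 xh
  -- decomposition of mutualInfo q
  have hMIq : mutualInfo q = (∑ xy : X × X, T xy) +
      ∑ xy : X × X, q xy * c (f xy.1) xy.2 := by
    unfold mutualInfo
    rw [← Finset.sum_add_distrib]
    refine Finset.sum_congr rfl ?_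
    rintro ⟨x, xh⟩ _
    dsimp only
    by_cases hqxy : 0 < q (x, xh)
    · have hppos : 0 < p x := lt_of_lt_of_le hqxy (hqp x xh)
      have hrpos : 0 < rA f q (f x) xh := lt_of_lt_of_le hqxy (hqr x xh)
      have hmpos : 0 < mA f p (f x) := lt_of_lt_of_le hppos (hpm x)
      have hq2pos : 0 < ∑ x', q (x', xh) := lt_of_lt_of_le hrpos (hrq2 (f x) xh)
      rw [if_pos hqxy, hT, hc]
      dsimp only
      rw [if_pos hqxy, hmarg x]
      have hsplit : q (x, xh) / (p x * ∑ x', q (x', xh)) =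
          (q (x, xh) * mA f p (f x) / (p x * rA f q (f x) xh)) *
          (rA f q (f x) xh / (mA f p (f x) * ∑ x', q (x', xh))) := by
        field_simp
      rw [hsplit, Real.log_mul (by positivity) (by positivity), mul_add]
    · have hq0' : q (x, xh) = 0 := le_antisymm (not_lt.mp hqxy) (hq0 _)
      rw [if_neg hqxy, hT]
      dsimp only
      rw [if_neg hqxy, hq0', zero_mul, add_zero]
  -- mutualInfo of q' in terms of c
  have hMIq' : mutualInfo (qA f p q) = ∑ xy : X × X, qA f p q xy * c (f xy.1) xy.2 := by
    unfold mutualInfo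
    refine Finset.sum_congr rfl ?_
    rintro ⟨x, xh⟩ _
    dsimp only
    by_cases hpos : 0 < qA f p q (x, xh)
    · have hppos : 0 < p x := by
        rcases (hp0 x).lt_or_eq with h | h
        · exact h
        · exfalso; rw [qA, ← h] at hpos; simp at hpos
      have hmpos : 0 < mA f p (f x) := lt_of_lt_of_le hppos (hpm x)
      have hrpos : 0 < rA f q (f x) xh := by
        rcases (hr0 (f x) xh).lt_or_eq with h | h
        · exact h
        · exfalso; rw [qA, ← h] at hpos; simp at hpos
      have hq2pos : 0 < ∑ x', q (x', xh) := lt_of_lt_of_le hrpos (hrq2 (f x) xh)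
      have hp' : p x ≠ 0 := ne_of_gt hppos
      have hm' : mA f p (f x) ≠ 0 := ne_of_gt hmpos
      have hq2' : (∑ x', q (x', xh)) ≠ 0 := ne_of_gt hq2pos
      have harg : qA f p q (x, xh) / (p x * ∑ x', q (x', xh)) =
          rA f q (f x) xh / (mA f p (f x) * ∑ x', q (x', xh)) := by
        rw [qA]
        dsimp only
        field_simp
      rw [if_pos hpos, hrow x, hcol xh, harg, hc]
    · have h0 : qA f p q (x, xh) = 0 := le_antisymm (not_lt.mp hpos) (hq'0 _)
      rw [if_neg hpos, h0, zero_mul]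
  -- the two c-weighted sums agree
  have hcc : ∑ xy : X × X, qA f p q xy * c (f xy.1) xy.2 =
      ∑ xy : X × X, q xy * c (f xy.1) xy.2 := by
    rw [Fintype.sum_prod_type_right, Fintype.sum_prod_type_right]
    refine Finset.sum_congr rfl fun xh _ => ?_
    dsimp only
    have hL : ∑ x, qA f p q (x, xh) * c (f x) xh =
        ∑ z, (fun z => rA f q z xh / mA f p z * c z xh) z * mA f p z := by
      rw [← fiber_mul_m f p (fun z => rA f q z xh / mA f p z * c z xh)]
      refine Finset.sum_congr rfl fun x _ => ?_
      show p x * (rA f q (f x) xh / mA f p (f x)) * c (f x) xh = _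
      ring
    have hR : ∑ x, q (x, xh) * c (f x) xh =
        ∑ z, (fun z => c z xh) z * rA f q z xh := by
      rw [← fiber_mul_r f q xh (fun z => c z xh)]
      refine Finset.sum_congr rfl fun x _ => ?_
      ring
    rw [hL, hR]
    refine Finset.sum_congr rfl fun z _ => ?_
    dsimp only
    by_cases hz : mA f p z = 0
    · have : rA f q z xh = 0 := le_antisymm (hz ▸ hrm z xh) (hr0 z xh)
      simp [this, hz]
    · field_simp
  -- sum of Gibbs terms = difference of mutual informations ≤ 0
  have hsum_T : ∑ xy : X × X, T xy = mutualInfo q - mutualInfo (qA f p q) := by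
    rw [hMIq, hMIq', hcc]; ring
  -- termwise equality
  have hnn : ∀ xy ∈ (univ : Finset (X × X)), 0 ≤ T xy - (q xy - qA f p q xy) :=
    fun xy _ => sub_nonneg.mpr (hTS xy)
  have hzero : ∑ xy : X × X, (T xy - (q xy - qA f p q xy)) = 0 := by
    have h1 : ∑ xy : X × X, (T xy - (q xy - qA f p q xy)) =
        (∑ xy : X × X, T xy) - ∑ xy : X × X, (q xy - qA f p q xy) :=
      Finset.sum_sub_distrib _ _
    have h2 : 0 ≤ ∑ xy : X × X, (T xy - (q xy - qA f p q xy)) :=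
      Finset.sum_nonneg hnn
    rw [h1, hsum_S, sub_zero, hsum_T] at h2 ⊢
    linarith [hIle]
  have hTeq : ∀ xy : X × X, T xy = q xy - qA f p q xy := by
    intro xy
    have := (Finset.sum_eq_zero_iff_of_nonneg hnn).mp hzero xy (mem_univ xy)
    linarith
  -- conclude
  intro x xh
  show q (x, xh) * mA f p (f x) = p x * rA f q (f x) xh
  by_cases hqxy : 0 < q (x, xh)
  · have hppos : 0 < p x := lt_of_lt_of_le hqxy (hqp x xh)
    have hrpos : 0 < rA f q (f x) xh := lt_of_lt_of_le hqxy (hqr x xh)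
    have hmpos : 0 < mA f p (f x) := lt_of_lt_of_le hppos (hpm x)
    set u : ℝ := q (x, xh) * mA f p (f x) / (p x * rA f q (f x) xh) with hu
    have hupos : 0 < u := by rw [hu]; positivity
    have hTval : T (x, xh) = q (x, xh) * Real.log u := by
      show (if 0 < q (x, xh) then _ else _) = _
      rw [if_pos hqxy]
    have hkey : q (x, xh) - qA f p q (x, xh) = q (x, xh) * (1 - u⁻¹) := by
      show q (x, xh) - p x * (rA f q (f x) xh / mA f p (f x)) = _
      rw [hu]
      field_simp
    have heq : Real.log u = 1 - u⁻¹ := by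
      have h := hTeq (x, xh)
      rw [hTval, hkey] at h
      exact mul_left_cancel₀ (ne_of_gt hqxy) h
    have hu1 : u = 1 := by
      by_contra hne
      have hinvne : u⁻¹ ≠ 1 := fun h => hne (by
        have := congrArg Inv.inv h
        simpa using this)
      have := Real.log_lt_sub_one_of_pos (inv_pos.mpr hupos) hinvne
      rw [Real.log_inv] at this
      linarith [heq]
    have hne : p x * rA f q (f x) xh ≠ 0 := by positivity
    have hu1' : q (x, xh) * mA f p (f x) / (p x * rA f q (f x) xh) = 1 := by
      rw [← hu]; exact hu1
    exact (div_eq_one_iff_eq hne).mp hu1'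
  · have hq0' : q (x, xh) = 0 := le_antisymm (not_lt.mp hqxy) (hq0 _)
    have hTval : T (x, xh) = 0 := by
      show (if 0 < q (x, xh) then _ else (0:ℝ)) = 0
      rw [if_neg hqxy]
    have hqA0 : qA f p q (x, xh) = 0 := by
      have h := hTeq (x, xh)
      rw [hTval, hq0', zero_sub] at h
      linarith
    rw [hq0', zero_mul]
    rw [qA] at hqA0
    dsimp only at hqA0
    rcases mul_eq_zero.mp hqA0 with h | h
    · rw [h, zero_mul]
    · rcases div_eq_zero_iff.mp h with h1 | h1
      · rw [h1, mul_zero]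
      · have hpx : p x = 0 := le_antisymm (h1 ▸ hpm x) (hp0 x)
        rw [hpx, zero_mul]
end
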